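/- arXiv:1904.05963 — 5 statements merged into one kernel-verified Lean document; each statement's English description precedes it below -/
import Mathlib

section
/- Let d ∈ ℕ, T,R,q,c,C ∈ [0,∞), let (Ω,ℱ,ℙ) be a probability space, let X^x: [0,T]×Ω → ℝ^d, x ∈ ℝ^d, be stochastic processes, let ‖·‖ be a norm on ℝ^d, assume for all h ∈ ℝ^d with 0 < ‖h‖ < 1 that sup_{x: ‖x‖≤R} sup_{t∈[0,T]} E[‖X^{x+h}(t) − X^x(t)‖] ≤ c·|ln(‖h‖)|^{−q}, and assume that C = sup_{x: ‖x‖≤R} sup_{t∈[0,T]} E[‖X^x(t)‖]. Then for all x,y ∈ ℝ^d with ‖x‖ ≤ R, ‖y‖ ≤ R, and 0 < ‖x−y‖ ≠ 1 it holds that sup_{t∈[0,T]} E[‖X^x(t) − X^y(t)‖] ≤ max{c, 2C·|ln(2R+1)|^q}·|ln(‖x−y‖)|^{−q}. -/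
open MeasureTheory ProbabilityTheory Filter
open scoped ENNReal NNReal

noncomputable section

/-- `N` is a norm on the real vector space `E`. -/
def IsNorm {E : Type*} [AddCommGroup E] [Module ℝ E] (N : E → ℝ) : Prop :=
  (∀ x, N x = 0 ↔ x = 0) ∧ (∀ (a : ℝ) (x : E), N (a • x) = |a| * N x) ∧
    ∀ x y, N (x + y) ≤ N x + N y

/-- **Lemma (sub-Hölder continuity in the initial value).** If the solution
family is logarithmically Hölder continuous with respect to small increments
of the initial value and has uniformly bounded first moments on the ball of
radius `R`, then it is logarithmically Hölder continuous on that ball. -/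
theorem log_hoelder_on_ball
    (d : ℕ) (hd : 0 < d) (T R q c C : ℝ)
    (hT : 0 ≤ T) (hR : 0 ≤ R) (hq : 0 ≤ q) (hc : 0 ≤ c) (hC0 : 0 ≤ C)
    {Ω : Type*} [MeasurableSpace Ω] (P : Measure Ω) [IsProbabilityMeasure P]
    (Nd : (Fin d → ℝ) → ℝ) (hNd : IsNorm Nd)
    (X : (Fin d → ℝ) → ℝ → Ω → (Fin d → ℝ))
    (hXmeas : ∀ x : Fin d → ℝ, ∀ t ∈ Set.Icc (0 : ℝ) T,
      Measurable (fun ω => X x t ω))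
    (hhol : ∀ h : Fin d → ℝ, 0 < Nd h → Nd h < 1 →
      ∀ x : Fin d → ℝ, Nd x ≤ R → ∀ t ∈ Set.Icc (0 : ℝ) T,
        (∫⁻ ω, ENNReal.ofReal (Nd (X (x + h) t ω - X x t ω)) ∂P) ≤
          ENNReal.ofReal (c * |Real.log (Nd h)| ^ (-q)))
    (hCsup : (⨆ x ∈ {z : Fin d → ℝ | Nd z ≤ R}, ⨆ t ∈ Set.Icc (0 : ℝ) T,
      ∫⁻ ω, ENNReal.ofReal (Nd (X x t ω)) ∂P) = ENNReal.ofReal C) :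
    ∀ x y : Fin d → ℝ, Nd x ≤ R → Nd y ≤ R →
      0 < Nd (x - y) → Nd (x - y) ≠ 1 →
      ∀ t ∈ Set.Icc (0 : ℝ) T,
        (∫⁻ ω, ENNReal.ofReal (Nd (X x t ω - X y t ω)) ∂P) ≤
          ENNReal.ofReal (max c (2 * C * |Real.log (2 * R + 1)| ^ q) *
            |Real.log (Nd (x - y))| ^ (-q)) := by
  intro x y hx hy hpos hne1 t ht
  obtain ⟨h0, hhom, htri⟩ := hNd
  have hneg : ∀ z, Nd (-z) = Nd z := by
    intro z
    have h' : (-1 : ℝ) • z = -z := by simp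
    rw [← h', hhom]; simp
  have hnonneg : ∀ z, 0 ≤ Nd z := by
    intro z
    have h1 : Nd (z + (-z)) ≤ Nd z + Nd (-z) := htri z (-z)
    have h2 : Nd (z + (-z)) = 0 := by rw [(h0 _)]; abel
    rw [hneg] at h1
    nlinarith [h1, h2]
  -- Nd is continuous (Lipschitz w.r.t. the sup norm)
  have hsum : ∀ (s : Finset (Fin d)) (f : Fin d → (Fin d → ℝ)),
      Nd (∑ i ∈ s, f i) ≤ ∑ i ∈ s, Nd (f i) := by
    intro s f
    induction s using Finset.induction with
    | empty => simp [(h0 0).mpr rfl]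
    | @insert _ _ hni ih =>
      rw [Finset.sum_insert hni, Finset.sum_insert hni]
      exact (htri _ _).trans (by linarith)
  have hK : ∀ z : Fin d → ℝ,
      Nd z ≤ (∑ i, Nd (Pi.single i 1)) * ‖z‖ := by
    intro z
    have hz : z = ∑ i, (z i) • (Pi.single i (1 : ℝ) : Fin d → ℝ) := by
      funext j
      simp [Finset.sum_apply, Pi.single_apply, mul_comm]
    calc Nd z = Nd (∑ i, (z i) • (Pi.single i (1 : ℝ) : Fin d → ℝ)) := by rw [← hz]
      _ ≤ ∑ i, Nd ((z i) • (Pi.single i (1 : ℝ) : Fin d → ℝ)) := hsum _ _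
      _ = ∑ i, |z i| * Nd (Pi.single i 1) := by simp [hhom]
      _ ≤ ∑ i, ‖z‖ * Nd (Pi.single i 1) := by
          apply Finset.sum_le_sum
          intro i _
          exact mul_le_mul_of_nonneg_right
            (by simpa using norm_le_pi_norm z i) (hnonneg _)
      _ = (∑ i, Nd (Pi.single i 1)) * ‖z‖ := by rw [Finset.sum_mul]; exact Finset.sum_congr rfl fun i _ => mul_comm _ _
  have hlip : ∀ a b : Fin d → ℝ,
      |Nd a - Nd b| ≤ (∑ i, Nd (Pi.single i 1)) * ‖a - b‖ := by
    intro a b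
    have t1 : Nd a ≤ Nd b + Nd (a - b) := by
      have : a = b + (a - b) := by abel
      calc Nd a = Nd (b + (a - b)) := by rw [← this]
        _ ≤ Nd b + Nd (a - b) := htri _ _
    have t2 : Nd b ≤ Nd a + Nd (a - b) := by
      have h' : b = a + (b - a) := by abel
      have h'' : Nd (b - a) = Nd (a - b) := by
        have : -(a - b) = b - a := by abel
        rw [← this, hneg]
      calc Nd b = Nd (a + (b - a)) := by rw [← h']
        _ ≤ Nd a + Nd (b - a) := htri _ _
        _ = Nd a + Nd (a - b) := by rw [h'']
    have := hK (a - b)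
    rw [abs_le]
    constructor <;> nlinarith
  have hcont : Continuous Nd := by
    apply Metric.continuous_iff.mpr
    intro a ε hε
    set K := (∑ i, Nd (Pi.single i (1:ℝ)))
    have hKnn : 0 ≤ K := Finset.sum_nonneg fun i _ => hnonneg _
    refine ⟨ε / (K + 1), div_pos hε (by linarith), fun b hb => ?_⟩
    have h1 := hlip b a
    have h2 : ‖b - a‖ = dist b a := by rw [dist_eq_norm]
    rw [Real.dist_eq]
    have : K * ‖b - a‖ ≤ K * (ε / (K + 1)) :=
      mul_le_mul_of_nonneg_left (by rw [h2]; exact hb.le) hKnn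
    have hfrac : K * (ε / (K + 1)) < ε := by
      rw [mul_div_assoc']
      rw [div_lt_iff₀ (by linarith)]
      nlinarith
    calc |Nd b - Nd a| ≤ K * ‖b - a‖ := h1
      _ ≤ K * (ε / (K + 1)) := this
      _ < ε := hfrac
  have hmeasN : ∀ z : Fin d → ℝ,
      Measurable fun ω => ENNReal.ofReal (Nd (X z t ω)) :=
    fun z => ENNReal.measurable_ofReal.comp
      ((hcont.measurable).comp (hXmeas z t ht))
  rcases lt_or_gt_of_ne hne1 with hlt | hgt
  · -- small case: use hhol
    have key := hhol (x - y) hpos hlt y hy t ht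
    have hxy : y + (x - y) = x := by abel
    rw [hxy] at key
    refine key.trans (ENNReal.ofReal_le_ofReal ?_)
    exact mul_le_mul_of_nonneg_right (le_max_left _ _)
      (Real.rpow_nonneg (abs_nonneg _) _)
  · -- large case: Nd (x - y) > 1
    have hB : (1 : ℝ) < Nd (x - y) := hgt
    have hbound : Nd (x - y) ≤ 2 * R := by
      have h' : Nd (x - y) ≤ Nd x + Nd (-y) := by
        have h'' : x - y = x + (-y) := by abel
        rw [h'']; exact htri x (-y)
      rw [hneg] at h'; linarith
    have hR1 : (1 : ℝ) < 2 * R := lt_of_lt_of_le hB hbound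
    have hint : ∀ z : Fin d → ℝ, Nd z ≤ R →
        (∫⁻ ω, ENNReal.ofReal (Nd (X z t ω)) ∂P) ≤ ENNReal.ofReal C := by
      intro z hz
      rw [← hCsup]
      calc (∫⁻ ω, ENNReal.ofReal (Nd (X z t ω)) ∂P)
          ≤ ⨆ s ∈ Set.Icc (0 : ℝ) T, ∫⁻ ω, ENNReal.ofReal (Nd (X z s ω)) ∂P :=
            le_biSup (fun s => ∫⁻ ω, ENNReal.ofReal (Nd (X z s ω)) ∂P) ht
        _ ≤ _ := le_biSup
            (fun w => ⨆ s ∈ Set.Icc (0 : ℝ) T,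
              ∫⁻ ω, ENNReal.ofReal (Nd (X w s ω)) ∂P) hz
    have hmain : (∫⁻ ω, ENNReal.ofReal (Nd (X x t ω - X y t ω)) ∂P) ≤
        ENNReal.ofReal (2 * C) := by
      calc (∫⁻ ω, ENNReal.ofReal (Nd (X x t ω - X y t ω)) ∂P)
          ≤ ∫⁻ ω, (ENNReal.ofReal (Nd (X x t ω)) + ENNReal.ofReal (Nd (X y t ω))) ∂P := by
            apply lintegral_mono
            intro ω
            dsimp only
            rw [← ENNReal.ofReal_add (hnonneg _) (hnonneg _)]
            apply ENNReal.ofReal_le_ofReal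
            have heq : X x t ω - X y t ω = X x t ω + (-(X y t ω)) := by abel
            rw [heq]
            refine (htri _ _).trans ?_
            rw [hneg]
        _ = (∫⁻ ω, ENNReal.ofReal (Nd (X x t ω)) ∂P) +
              (∫⁻ ω, ENNReal.ofReal (Nd (X y t ω)) ∂P) :=
            lintegral_add_left (hmeasN x) _
        _ ≤ ENNReal.ofReal C + ENNReal.ofReal C :=
            add_le_add (hint x hx) (hint y hy)
        _ = ENNReal.ofReal (2 * C) := by
            rw [← ENNReal.ofReal_add hC0 hC0]; ring_nf
    refine hmain.trans (ENNReal.ofReal_le_ofReal ?_)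
    set A := |Real.log (2 * R + 1)| with hA
    set B := |Real.log (Nd (x - y))| with hBdef
    have hBpos : 0 < B := by
      rw [hBdef]
      have hlg : 0 < Real.log (Nd (x - y)) := Real.log_pos hB
      rw [abs_of_pos hlg]; exact hlg
    have hApos : 0 < Real.log (2 * R + 1) := Real.log_pos (by linarith)
    have hBA : B ≤ A := by
      rw [hBdef, hA, abs_of_pos (Real.log_pos hB), abs_of_pos hApos]
      exact Real.log_le_log (by linarith) (by linarith)
    have hpow : B ^ q ≤ A ^ q := Real.rpow_le_rpow hBpos.le hBA hq
    have hBq : 0 < B ^ q := Real.rpow_pos_of_pos hBpos q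
    have h1le : (1 : ℝ) ≤ A ^ q * B ^ (-q) := by
      rw [Real.rpow_neg hBpos.le, ← div_eq_mul_inv, le_div_iff₀ hBq]
      simpa using hpow
    calc (2 : ℝ) * C = 2 * C * 1 := by ring
      _ ≤ 2 * C * (A ^ q * B ^ (-q)) :=
          mul_le_mul_of_nonneg_left h1le (by linarith)
      _ = (2 * C * A ^ q) * B ^ (-q) := by ring
      _ ≤ max c (2 * C * A ^ q) * B ^ (-q) :=
          mul_le_mul_of_nonneg_right (le_max_right _ _)
            (Real.rpow_nonneg (abs_nonneg _) _)
end
end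

section
/- Let d ∈ ℕ, T,κ ∈ [0,∞), let (Ω,ℱ,ℙ) be a probability space, let ‖·‖ be a norm on ℝ^d, let X^x: [0,T]×Ω → ℝ^d, x ∈ ℝ^d, be stochastic processes which satisfy for all ω ∈ Ω that the map (t,x) ↦ X^x(t,ω) belongs to C^{0,1}([0,T]×ℝ^d,ℝ^d), assume for all R,r ∈ [0,∞) that E[sup_{x∈ℚ^d: ‖x‖≤R} sup_{t∈[0,T]∩ℚ} ‖X^x(t)‖^r] < ∞, and assume for all x,h ∈ ℝ^d, t ∈ [0,T], ω ∈ Ω that ‖(∂/∂x X^x(t,ω))(h)‖ ≤ ‖h‖ + κ·∫₀^t (1+‖X^x(s,ω)‖^κ)·‖(∂/∂x X^x(s,ω))(h)‖ ds. Then for all R,q ∈ [0,∞) there exists c ∈ [0,∞) such that for all h ∈ ℝ^d with 0 < ‖h‖ < 1 it holds that sup_{x: ‖x‖≤R} sup_{t∈[0,T]} E[‖X^{x+h}(t) − X^x(t)‖] ≤ c·|ln(‖h‖)|^{−q}. -/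
open MeasureTheory ProbabilityTheory Filter
open scoped ENNReal NNReal

noncomputable section

/-- the rational points of the interval `[0,T]`. -/
def ratIcc (T : ℝ) : Set ℝ := Set.Icc 0 T ∩ Set.range ((↑) : ℚ → ℝ)

/-- the points of `ℚ^d` whose `N`-norm is at most `R`. -/
def ratBall (d : ℕ) (N : (Fin d → ℝ) → ℝ) (R : ℝ) : Set (Fin d → ℝ) :=
  {x | (∀ i, ∃ q : ℚ, (q : ℝ) = x i) ∧ N x ≤ R}

/-- `g` belongs to `C^{0,1}([0,T] × ℝ^d, ℝ^d)`: `g` is continuous on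
`[0,T] × ℝ^d`, for every `t ∈ [0,T]` the map `x ↦ g t x` is differentiable,
and `(t,x) ↦ ∂/∂x g(t,x)` is continuous on `[0,T] × ℝ^d`. -/
def IsC01 (d : ℕ) (T : ℝ) (g : ℝ → (Fin d → ℝ) → (Fin d → ℝ)) : Prop :=
  ContinuousOn (fun p : ℝ × (Fin d → ℝ) => g p.1 p.2) (Set.Icc 0 T ×ˢ Set.univ) ∧
  (∀ t ∈ Set.Icc (0 : ℝ) T, Differentiable ℝ (g t)) ∧
  ContinuousOn (fun p : ℝ × (Fin d → ℝ) => fderiv ℝ (g p.1) p.2)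
    (Set.Icc 0 T ×ˢ Set.univ)

namespace IsNormAux

variable {E : Type*} [AddCommGroup E] [Module ℝ E] {N : E → ℝ}

lemma zero (hN : IsNorm N) : N 0 = 0 := (hN.1 0).mpr rfl

lemma neg (hN : IsNorm N) (x : E) : N (-x) = N x := by
  have := hN.2.1 (-1) x
  simpa using this

lemma nonneg (hN : IsNorm N) (x : E) : 0 ≤ N x := by
  have h1 : N 0 ≤ N x + N (-x) := by
    have := hN.2.2 x (-x); simpa using this
  rw [zero hN, neg hN] at h1
  linarith

lemma sub_le (hN : IsNorm N) (x y : E) : N x - N y ≤ N (x - y) := by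
  have := hN.2.2 (x - y) y
  simp only [sub_add_cancel] at this
  linarith

lemma sum_le (hN : IsNorm N) {ι : Type*} (s : Finset ι) (f : ι → E) :
    N (∑ i ∈ s, f i) ≤ ∑ i ∈ s, N (f i) :=
  Finset.le_sum_of_subadditive N (zero hN).le hN.2.2 s f

end IsNormAux

section FinDim

variable {d : ℕ} {N : (Fin d → ℝ) → ℝ}

lemma isnorm_upper (hN : IsNorm N) : ∃ C : ℝ, 0 < C ∧ ∀ x, N x ≤ C * ‖x‖ := by
  classical
  refine ⟨(∑ i, N (fun j => if i = j then 1 else 0)) + 1, ?_, ?_⟩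
  · have : ∀ i : Fin d, 0 ≤ N (fun j => if i = j then 1 else 0) :=
      fun i => IsNormAux.nonneg hN _
    have h2 : (0:ℝ) ≤ ∑ i, N (fun j => if i = j then 1 else 0) :=
      Finset.sum_nonneg (fun i _ => this i)
    linarith
  · intro x
    have hx : x = ∑ i, x i • (fun j => if i = j then (1:ℝ) else 0) := pi_eq_sum_univ x
    calc N x = N (∑ i, x i • (fun j => if i = j then (1:ℝ) else 0)) := by rw [← hx]
      _ ≤ ∑ i, N (x i • (fun j => if i = j then (1:ℝ) else 0)) :=
          IsNormAux.sum_le hN _ _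
      _ = ∑ i, |x i| * N (fun j => if i = j then (1:ℝ) else 0) := by
          simp_rw [hN.2.1]
      _ ≤ ∑ i, ‖x‖ * N (fun j => if i = j then (1:ℝ) else 0) := by
          apply Finset.sum_le_sum
          intro i _
          exact mul_le_mul_of_nonneg_right (by
            rw [← Real.norm_eq_abs]; exact norm_le_pi_norm x i) (IsNormAux.nonneg hN _)
      _ = (∑ i, N (fun j => if i = j then (1:ℝ) else 0)) * ‖x‖ := by
          rw [Finset.sum_mul]
          exact Finset.sum_congr rfl (fun i _ => mul_comm _ _)
      _ ≤ _ := by nlinarith [norm_nonneg x]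

lemma isnorm_continuous (hN : IsNorm N) : Continuous N := by
  obtain ⟨C, hC, hCle⟩ := isnorm_upper hN
  apply (LipschitzWith.of_dist_le_mul (K := ⟨C, hC.le⟩) (f := N) ?_).continuous
  intro x y
  rw [Real.dist_eq, dist_eq_norm]
  rcases abs_cases (N x - N y) with ⟨h1, _⟩ | ⟨h1, _⟩ <;> rw [h1]
  · show N x - N y ≤ C * ‖x - y‖
    exact (IsNormAux.sub_le hN x y).trans (hCle _)
  · have h2 := (IsNormAux.sub_le hN y x).trans (hCle (y - x))
    have h3 : ‖y - x‖ = ‖x - y‖ := norm_sub_rev y x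
    rw [h3] at h2
    show -(N x - N y) ≤ C * ‖x - y‖
    linarith

lemma isnorm_lower (hd : 0 < d) (hN : IsNorm N) : ∃ c : ℝ, 0 < c ∧ ∀ x, c * ‖x‖ ≤ N x := by
  have hsph : IsCompact (Metric.sphere (0 : Fin d → ℝ) 1) := isCompact_sphere 0 1
  have hne : (Metric.sphere (0 : Fin d → ℝ) 1).Nonempty := by
    haveI : Nonempty (Fin d) := ⟨⟨0, hd⟩⟩
    refine ⟨fun _ => 1, ?_⟩
    simp only [Metric.mem_sphere, dist_eq_norm, sub_zero]
    rw [pi_norm_const]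
    simp
  obtain ⟨x₀, hx₀mem, hx₀min⟩ := hsph.exists_isMinOn hne ((isnorm_continuous hN).continuousOn)
  have hx₀ : ‖x₀‖ = 1 := by simpa [dist_eq_norm] using hx₀mem
  have hc : 0 < N x₀ := by
    rcases (IsNormAux.nonneg hN x₀).lt_or_eq with h | h
    · exact h
    · exfalso
      have : x₀ = 0 := (hN.1 x₀).mp h.symm
      rw [this] at hx₀; simp at hx₀
  refine ⟨N x₀, hc, fun x => ?_⟩
  rcases eq_or_ne x 0 with rfl | hx
  · simp [IsNormAux.zero hN]
  · have hnx : (0:ℝ) < ‖x‖ := norm_pos_iff.mpr hx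
    have hmem : ‖x‖⁻¹ • x ∈ Metric.sphere (0 : Fin d → ℝ) 1 := by
      simp [norm_smul, abs_of_pos (inv_pos.mpr hnx), inv_mul_cancel₀ hnx.ne']
    have := hx₀min hmem
    have h2 : N (‖x‖⁻¹ • x) = ‖x‖⁻¹ * N x := by
      rw [hN.2.1, abs_of_pos (inv_pos.mpr hnx)]
    rw [isMinOn_iff] at hx₀min
    have h3 := hx₀min _ hmem
    rw [h2] at h3
    calc N x₀ * ‖x‖ ≤ (‖x‖⁻¹ * N x) * ‖x‖ := by nlinarith
      _ = N x := by field_simp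

end FinDim


open MeasureTheory intervalIntegral Set

lemma gronwall_int {T a B : ℝ} (hT : 0 ≤ T) (ha : 0 ≤ a) (hB : 0 ≤ B)
    (u : ℝ → ℝ) (hu : ContinuousOn u (Set.Icc 0 T))
    (hupos : ∀ s ∈ Set.Icc 0 T, 0 ≤ u s)
    (hineq : ∀ t ∈ Set.Icc 0 T, u t ≤ a + B * ∫ s in (0:ℝ)..t, u s) :
    ∀ t ∈ Set.Icc 0 T, u t ≤ a * Real.exp (B * t) := by
  set cl : ℝ → ℝ := fun s => max 0 (min s T) with hcl
  have hclamp : Continuous cl := (continuous_const.max (continuous_id.min continuous_const))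
  have hclmem : ∀ s, cl s ∈ Set.Icc 0 T := by
    intro s
    constructor
    · exact le_max_left _ _
    · exact max_le hT (min_le_right _ _)
  have hcleq : ∀ s ∈ Set.Icc 0 T, cl s = s := by
    intro s hs
    simp only [hcl]
    rw [min_eq_left hs.2, max_eq_right hs.1]
  set v : ℝ → ℝ := fun s => u (cl s) with hv
  have hvc : Continuous v := hu.comp_continuous hclamp hclmem
  have hvpos : ∀ s, 0 ≤ v s := fun s => hupos _ (hclmem s)
  have hveq : ∀ s ∈ Set.Icc 0 T, v s = u s := fun s hs => by
    simp only [hv]; rw [hcleq s hs]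
  set F : ℝ → ℝ := fun r => ∫ s in (0:ℝ)..r, v s with hF
  have hFderiv : ∀ r : ℝ, HasDerivAt F (v r) r := fun r =>
    integral_hasDerivAt_right (hvc.intervalIntegrable _ _)
      hvc.aestronglyMeasurable.stronglyMeasurableAtFilter hvc.continuousAt
  have hFeq : ∀ t ∈ Set.Icc 0 T, F t = ∫ s in (0:ℝ)..t, u s := by
    intro t ht
    apply intervalIntegral.integral_congr
    intro s hs
    apply hveq
    rw [Set.uIcc_of_le ht.1] at hs
    exact ⟨hs.1, hs.2.trans ht.2⟩
  have hFnonneg : ∀ t ∈ Set.Icc 0 T, 0 ≤ F t := by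
    intro t ht
    exact intervalIntegral.integral_nonneg ht.1 (fun s _ => hvpos s)
  have key : ∀ t ∈ Set.Icc 0 T, ‖F t‖ ≤ gronwallBound 0 B a (t - 0) := by
    apply norm_le_gronwallBound_of_norm_deriv_right_le
    · exact fun r _ => (hFderiv r).continuousAt.continuousWithinAt
    · exact fun r _ => (hFderiv r).hasDerivWithinAt
    · simp [hF]
    · intro r hr
      have hr' : r ∈ Set.Icc 0 T := ⟨hr.1, hr.2.le⟩
      have : v r = u r := hveq r hr'
      rw [Real.norm_eq_abs, Real.norm_eq_abs, this,
        abs_of_nonneg (hupos r hr'), abs_of_nonneg (hFnonneg r hr')]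
      calc u r ≤ a + B * ∫ s in (0:ℝ)..r, u s := hineq r hr'
        _ = B * F r + a := by rw [hFeq r hr']; ring
  intro t ht
  calc u t ≤ a + B * ∫ s in (0:ℝ)..t, u s := hineq t ht
    _ = a + B * F t := by rw [hFeq t ht]
    _ ≤ a + B * gronwallBound 0 B a (t - 0) := by
        gcongr
        calc F t ≤ ‖F t‖ := le_abs_self _
          _ ≤ _ := key t ht
    _ ≤ a * Real.exp (B * t) := by
        rcases eq_or_ne B 0 with hB0 | hB0
        · simp [hB0, gronwallBound, ha]
        · rw [gronwallBound_of_K_ne_0 hB0]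
          have : a + B * (0 * Real.exp (B * (t - 0)) + a / B * (Real.exp (B * (t - 0)) - 1))
              = a * Real.exp (B * t) := by
            field_simp
            ring
          rw [this]


lemma exp_decay_bound (q : ℝ) (hq : 0 ≤ q) :
    ∃ D : ℝ, 1 ≤ D ∧ ∀ u : ℝ, 0 ≤ u → u ^ q * Real.exp (-(u/2)) ≤ D := by
  set m : ℕ := ⌈q⌉₊ + 1 with hm
  have hqm : q ≤ (m : ℝ) := by
    have := Nat.le_ceil q
    push_cast [hm]
    linarith
  have hmpos : (0:ℝ) < m := by positivity
  refine ⟨max 1 ((4*m)^m), le_max_left _ _, fun u hu => ?_⟩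
  rcases le_or_gt u 1 with hu1 | hu1
  · have h1 : u ^ q ≤ 1 := Real.rpow_le_one hu hu1 hq
    have h2 : Real.exp (-(u/2)) ≤ 1 := Real.exp_le_one_iff.mpr (by linarith)
    have : u ^ q * Real.exp (-(u/2)) ≤ 1 := by
      nlinarith [Real.exp_pos (-(u/2)), Real.rpow_nonneg hu q]
    exact this.trans (le_max_left _ _)
  · have h1 : u ^ q ≤ u ^ (m:ℝ) := Real.rpow_le_rpow_of_exponent_le hu1.le hqm
    rw [Real.rpow_natCast] at h1
    have h2 : u ≤ 4*m * Real.exp (u/(4*m)) := by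
      have h3 : u/(4*m) + 1 ≤ Real.exp (u/(4*m)) := Real.add_one_le_exp _
      have h4 : (0:ℝ) < 4*m := by positivity
      have h5 : u = (u/(4*m)) * (4*m) := by field_simp
      nlinarith
    have h5 : u ^ m ≤ (4*m * Real.exp (u/(4*m))) ^ m :=
      pow_le_pow_left₀ hu h2 m
    have h6 : (4*m * Real.exp (u/(4*m))) ^ m = (4*m:ℝ)^m * Real.exp (u/4) := by
      rw [mul_pow, ← Real.exp_nat_mul]
      congr 1
      field_simp
    have h7 : u ^ m * Real.exp (-(u/2)) ≤ (4*m:ℝ)^m * Real.exp (u/4) * Real.exp (-(u/2)) := by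
      have := Real.exp_pos (-(u/2))
      nlinarith [pow_nonneg hu m]
    have h8 : Real.exp (u/4) * Real.exp (-(u/2)) = Real.exp (-(u/4)) := by
      rw [← Real.exp_add]; ring_nf
    have h9 : Real.exp (-(u/4)) ≤ 1 := Real.exp_le_one_iff.mpr (by linarith)
    calc u ^ q * Real.exp (-(u/2)) ≤ u ^ m * Real.exp (-(u/2)) := by
          nlinarith [Real.exp_pos (-(u/2))]
      _ ≤ (4*m:ℝ)^m * (Real.exp (u/4) * Real.exp (-(u/2))) := by rw [← mul_assoc]; exact h7
      _ = (4*m:ℝ)^m * Real.exp (-(u/4)) := by rw [h8]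
      _ ≤ (4*m:ℝ)^m := by nlinarith [pow_pos (by positivity : (0:ℝ) < 4*m) m]
      _ ≤ max 1 ((4*(m:ℝ))^m) := le_max_right _ _

lemma subset_closure_ratIcc {T : ℝ} (hT : 0 ≤ T) :
    Set.Icc (0:ℝ) T ⊆ closure (ratIcc T) := by
  intro t ht
  rw [Metric.mem_closure_iff]
  intro ε hε
  rcases eq_or_lt_of_le ht.1 with h0 | h0
  · refine ⟨0, ⟨⟨le_refl 0, hT⟩, ⟨0, by norm_num⟩⟩, ?_⟩
    rw [← h0]
    simpa using hε
  · have hlt : max 0 (t - ε) < t := by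
      rcases le_or_gt 0 (t - ε) with h | h
      · rw [max_eq_right h]; linarith
      · rw [max_eq_left h.le]; exact h0
    obtain ⟨r, hr1, hr2⟩ := exists_rat_btwn hlt
    refine ⟨(r:ℝ), ⟨⟨?_, ?_⟩, ⟨r, rfl⟩⟩, ?_⟩
    · exact le_of_lt (lt_of_le_of_lt (le_max_left _ _) hr1)
    · linarith [ht.2]
    · rw [Real.dist_eq, abs_of_pos (by linarith)]
      have := le_max_right 0 (t - ε)
      linarith

lemma exists_rat_approx {d : ℕ} (y : Fin d → ℝ) {ε : ℝ} (hε : 0 < ε) :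
    ∃ z : Fin d → ℝ, (∀ i, ∃ q : ℚ, (q:ℝ) = z i) ∧ ‖z - y‖ < ε := by
  have h : ∀ i : Fin d, ∃ q : ℚ, y i < (q:ℝ) ∧ (q:ℝ) < y i + ε/2 :=
    fun i => exists_rat_btwn (by linarith)
  choose q hq1 hq2 using h
  refine ⟨fun i => (q i : ℝ), fun i => ⟨q i, rfl⟩, ?_⟩
  rw [pi_norm_lt_iff hε]
  intro i
  simp only [Pi.sub_apply, Real.norm_eq_abs]
  rw [abs_of_pos (by linarith [hq1 i])]
  linarith [hq2 i]

lemma mem_closure_ratBall {d : ℕ} {N : (Fin d → ℝ) → ℝ} (hN : IsNorm N)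
    {C : ℝ} (hC : 0 < C) (hCle : ∀ x, N x ≤ C * ‖x‖)
    (hNsub : ∀ x y, N x - N y ≤ N (x - y))
    {R : ℝ} (hR : 0 < R) {x : Fin d → ℝ} (hx : N x ≤ R) :
    x ∈ closure (ratBall d N R) := by
  rw [Metric.mem_closure_iff]
  intro ε hε
  set δ : ℝ := min (1/2) (ε / (2*(‖x‖+1))) with hδdef
  have hxn : (0:ℝ) ≤ ‖x‖ := norm_nonneg x
  have hδpos : 0 < δ := lt_min (by norm_num) (by positivity)
  have hδle : δ ≤ ε / (2*(‖x‖+1)) := min_le_right _ _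
  have hδ1 : δ ≤ 1/2 := min_le_left _ _
  set y : Fin d → ℝ := (1-δ) • x with hy
  have hyx : ‖y - x‖ < ε/2 := by
    have : y - x = (-δ) • x := by rw [hy]; module
    rw [this, norm_smul, Real.norm_eq_abs, abs_neg, abs_of_pos hδpos]
    calc δ * ‖x‖ ≤ (ε / (2*(‖x‖+1))) * ‖x‖ := by nlinarith
      _ < ε/2 := by
        rw [div_mul_eq_mul_div, div_lt_iff₀ (by positivity)]
        nlinarith
  have hNy : N y ≤ R - δ * R := by
    rw [hy, hN.2.1, abs_of_pos (by linarith)]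
    nlinarith [hN.2.1 1 x, hNsub x x]
  set η : ℝ := min (ε/2) (δ*R/C) with hη
  have hηpos : 0 < η := lt_min (by linarith) (by positivity)
  obtain ⟨z, hzrat, hzy⟩ := exists_rat_approx y hηpos
  refine ⟨z, ⟨hzrat, ?_⟩, ?_⟩
  · have h1 : N z - N y ≤ N (z - y) := hNsub z y
    have h2 : N (z - y) ≤ C * ‖z - y‖ := hCle _
    have h3 : C * ‖z - y‖ ≤ C * η := by nlinarith [hzy]
    have h4 : C * η ≤ C * (δ*R/C) := by
      have := min_le_right (ε/2) (δ*R/C); nlinarith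
    have h5 : C * (δ*R/C) = δ*R := by field_simp
    linarith
  · rw [dist_eq_norm]
    have : x - z = (x - y) + (y - z) := by abel
    rw [this]
    have h6 := norm_add_le (x - y) (y - z)
    rw [norm_sub_rev x y, norm_sub_rev y z] at h6
    have h7 : ‖z - y‖ < ε/2 := lt_of_lt_of_le hzy (min_le_left _ _)
    linarith



set_option maxHeartbeats 4000000

/-- **Lemma (conditional sub-Hölder continuity with respect to the initial
value).** -/
theorem conditional_log_hoelder
    (d : ℕ) (hd : 0 < d) (T κ : ℝ) (hT : 0 ≤ T) (hκ : 0 ≤ κ)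
    {Ω : Type*} [MeasurableSpace Ω] (P : Measure Ω) [IsProbabilityMeasure P]
    (Nd : (Fin d → ℝ) → ℝ) (hNd : IsNorm Nd)
    (X : (Fin d → ℝ) → ℝ → Ω → (Fin d → ℝ))
    (hXmeas : ∀ x : Fin d → ℝ, ∀ t ∈ Set.Icc (0 : ℝ) T,
      Measurable (fun ω => X x t ω))
    (hXC01 : ∀ ω, IsC01 d T (fun t x => X x t ω))
    (hmom : ∀ R r : ℝ, 0 ≤ R → 0 ≤ r →
      (∫⁻ ω, (⨆ x ∈ ratBall d Nd R, ⨆ t ∈ ratIcc T,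
        ENNReal.ofReal (Nd (X x t ω) ^ r)) ∂P) < ⊤)
    (hder : ∀ x h : Fin d → ℝ, ∀ t ∈ Set.Icc (0 : ℝ) T, ∀ ω,
      Nd (fderiv ℝ (fun y => X y t ω) x h) ≤
        Nd h + κ * ∫ s in (0 : ℝ)..t,
          (1 + Nd (X x s ω) ^ κ) * Nd (fderiv ℝ (fun y => X y s ω) x h)) :
    ∀ R q : ℝ, 0 ≤ R → 0 ≤ q → ∃ c : ℝ, 0 ≤ c ∧
      ∀ h : Fin d → ℝ, 0 < Nd h → Nd h < 1 →
        ∀ x : Fin d → ℝ, Nd x ≤ R → ∀ t ∈ Set.Icc (0 : ℝ) T,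
          (∫⁻ ω, ENNReal.ofReal (Nd (X (x + h) t ω - X x t ω)) ∂P) ≤
            ENNReal.ofReal (c * |Real.log (Nd h)| ^ (-q)) := by
  classical
  intro R q hR hq
  obtain ⟨C₂, hC₂pos, hC₂le⟩ := isnorm_upper hNd
  obtain ⟨c₁, hc₁pos, hc₁le⟩ := isnorm_lower hd hNd
  obtain ⟨D, hD1, hDle⟩ := exp_decay_bound q hq
  have hNnn : ∀ v, 0 ≤ Nd v := IsNormAux.nonneg hNd
  have hNsub : ∀ v w, Nd v - Nd w ≤ Nd (v - w) := IsNormAux.sub_le hNd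
  have hNdc : Continuous Nd := isnorm_continuous hNd
  have hR1 : (0:ℝ) < R + 1 := by linarith
  -- countability of index sets
  have hcountB : (ratBall d Nd (R+1)).Countable := by
    have hsub : ratBall d Nd (R+1) ⊆
        Set.range (fun v : Fin d → ℚ => fun i => ((v i : ℝ))) := by
      intro x hx
      choose f hf using hx.1
      exact ⟨f, funext hf⟩
    exact (Set.countable_range _).mono hsub
  have hcountI : (ratIcc T).Countable := by
    have hsub : ratIcc T ⊆ Set.range ((↑) : ℚ → ℝ) := fun t ht => ht.2
    exact (Set.countable_range _).mono hsub
  -- the random variable M : pathwise supremum (ENNReal-valued)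
  set M : Ω → ℝ≥0∞ := fun ω => ⨆ x ∈ ratBall d Nd (R+1), ⨆ t ∈ ratIcc T,
      ENNReal.ofReal (Nd (X x t ω)) with hMdef
  have hMmeas : Measurable M := by
    apply Measurable.biSup _ hcountB
    intro x hx
    apply Measurable.biSup _ hcountI
    intro t ht
    exact ENNReal.measurable_ofReal.comp (hNdc.measurable.comp (hXmeas x t ht.1))
  have hMtop : ∀ ω, M ω ≠ ⊤ := by
    intro ω
    have hBall : IsCompact {v : Fin d → ℝ | Nd v ≤ R+1} := by
      apply IsCompact.of_isClosed_subset (isCompact_closedBall (0 : Fin d → ℝ) ((R+1)/c₁))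
        (IsClosed.preimage hNdc isClosed_Iic)
      intro v hv
      rw [Metric.mem_closedBall, dist_zero_right]
      rw [le_div_iff₀ hc₁pos]
      calc ‖v‖ * c₁ = c₁ * ‖v‖ := mul_comm _ _
        _ ≤ Nd v := hc₁le v
        _ ≤ R + 1 := hv
    have hK : IsCompact ((Set.Icc (0:ℝ) T) ×ˢ {v : Fin d → ℝ | Nd v ≤ R+1}) :=
      isCompact_Icc.prod hBall
    have hFcont : ContinuousOn (fun p : ℝ × (Fin d → ℝ) => Nd (X p.2 p.1 ω))
        ((Set.Icc (0:ℝ) T) ×ˢ {v : Fin d → ℝ | Nd v ≤ R+1}) := by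
      apply (hNdc.comp_continuousOn (hXC01 ω).1).mono
      intro p hp
      exact ⟨hp.1, trivial⟩
    obtain ⟨B, hB⟩ := (hK.image_of_continuousOn hFcont).bddAbove
    simp only [mem_upperBounds, Set.mem_image] at hB
    have hle : M ω ≤ ENNReal.ofReal B := by
      apply iSup₂_le
      intro x hx
      apply iSup₂_le
      intro t' ht'
      apply ENNReal.ofReal_le_ofReal
      exact hB _ ⟨(t', x), ⟨ht'.1, hx.2⟩, rfl⟩
    exact ne_top_of_le_ne_top ENNReal.ofReal_ne_top hle
  set Mr : Ω → ℝ := fun ω => (M ω).toReal with hMrdef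
  have hMrnn : ∀ ω, 0 ≤ Mr ω := fun ω => ENNReal.toReal_nonneg
  have hMdom : ∀ ω (x' : Fin d → ℝ), Nd x' ≤ R+1 → ∀ t ∈ Set.Icc (0:ℝ) T,
      Nd (X x' t ω) ≤ Mr ω := by
    intro ω x' hx' t ht
    rw [hMrdef]
    rw [← ENNReal.ofReal_le_iff_le_toReal (hMtop ω)]
    set Sp : Set (ℝ × (Fin d → ℝ)) := (ratIcc T) ×ˢ (ratBall d Nd (R+1)) with hSpdef
    have hp₀ : ((t, x') : ℝ × (Fin d → ℝ)) ∈ closure Sp := by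
      rw [hSpdef, closure_prod_eq]
      exact ⟨subset_closure_ratIcc hT ht,
        mem_closure_ratBall hNd hC₂pos hC₂le hNsub hR1 hx'⟩
    have hcw : ContinuousWithinAt (fun p : ℝ × (Fin d → ℝ) => Nd (X p.2 p.1 ω)) Sp (t, x') := by
      apply ContinuousWithinAt.mono
        ((hNdc.comp_continuousOn (hXC01 ω).1).continuousWithinAt
          (show ((t, x') : ℝ × (Fin d → ℝ)) ∈ (Set.Icc (0:ℝ) T) ×ˢ Set.univ from ⟨ht, trivial⟩))
      intro p hp
      exact ⟨hp.1.1, trivial⟩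
    haveI hne : (nhdsWithin ((t, x') : ℝ × (Fin d → ℝ)) Sp).NeBot :=
      mem_closure_iff_nhdsWithin_neBot.mp hp₀
    apply le_of_tendsto (ENNReal.continuous_ofReal.continuousAt.tendsto.comp hcw)
    apply eventually_nhdsWithin_of_forall
    intro p hp
    calc ENNReal.ofReal (Nd (X p.2 p.1 ω))
        ≤ ⨆ t' ∈ ratIcc T, ENNReal.ofReal (Nd (X p.2 t' ω)) :=
          le_biSup (fun t' => ENNReal.ofReal (Nd (X p.2 t' ω))) hp.1
      _ ≤ M ω := le_biSup
          (fun x => ⨆ t' ∈ ratIcc T, ENNReal.ofReal (Nd (X x t' ω))) hp.2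
  have hMn : ∀ k : ℕ, 0 < k → (∫⁻ ω, (M ω)^k ∂P) < ⊤ := by
    intro k hk
    have hkR : (0:ℝ) < (k:ℝ) := by exact_mod_cast hk
    refine lt_of_le_of_lt ?_ (hmom (R+1) (k:ℝ) hR1.le hkR.le)
    apply lintegral_mono
    intro ω
    have h1 : M ω ≤ (⨆ x ∈ ratBall d Nd (R+1), ⨆ t ∈ ratIcc T,
        ENNReal.ofReal (Nd (X x t ω) ^ ((k:ℕ):ℝ))) ^ (1/(k:ℝ)) := by
      apply iSup₂_le
      intro x hx
      apply iSup₂_le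
      intro t' ht'
      have heq : ENNReal.ofReal (Nd (X x t' ω)) =
          (ENNReal.ofReal (Nd (X x t' ω) ^ ((k:ℕ):ℝ))) ^ (1/(k:ℝ)) := by
        rw [← ENNReal.ofReal_rpow_of_nonneg (hNnn _) (by positivity),
          ← ENNReal.rpow_mul, mul_one_div_cancel hkR.ne', ENNReal.rpow_one]
      rw [heq]
      apply ENNReal.rpow_le_rpow _ (by positivity)
      calc (ENNReal.ofReal (Nd (X x t' ω) ^ ((k:ℕ):ℝ)))
          ≤ ⨆ t'' ∈ ratIcc T, ENNReal.ofReal (Nd (X x t'' ω) ^ ((k:ℕ):ℝ)) :=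
            le_biSup (fun t'' => ENNReal.ofReal (Nd (X x t'' ω) ^ ((k:ℕ):ℝ))) ht'
        _ ≤ _ := le_biSup
            (fun x' => ⨆ t'' ∈ ratIcc T, ENNReal.ofReal (Nd (X x' t'' ω) ^ ((k:ℕ):ℝ))) hx
    calc (M ω)^k = (M ω) ^ ((k:ℕ):ℝ) := (ENNReal.rpow_natCast _ k).symm
      _ ≤ ((⨆ x ∈ ratBall d Nd (R+1), ⨆ t ∈ ratIcc T,
            ENNReal.ofReal (Nd (X x t ω) ^ ((k:ℕ):ℝ))) ^ (1/(k:ℝ))) ^ ((k:ℕ):ℝ) :=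
          ENNReal.rpow_le_rpow h1 (by positivity)
      _ = _ := by
          rw [← ENNReal.rpow_mul, one_div_mul_cancel hkR.ne', ENNReal.rpow_one]

  -- Gronwall bound on the derivative
  have hgron : ∀ ω (x' : Fin d → ℝ), Nd x' ≤ R+1 → ∀ t ∈ Set.Icc (0:ℝ) T,
      ∀ v : Fin d → ℝ, Nd (fderiv ℝ (fun y => X y t ω) x' v) ≤
        Nd v * Real.exp (κ * (1 + Mr ω ^ κ) * T) := by
    intro ω x' hx' t ht v
    set B : ℝ := κ * (1 + Mr ω ^ κ) with hBdef
    have hMκnn : 0 ≤ Mr ω ^ κ := Real.rpow_nonneg (hMrnn ω) κ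
    have hBnn : 0 ≤ B := mul_nonneg hκ (by linarith)
    set u : ℝ → ℝ := fun s => Nd (fderiv ℝ (fun y => X y s ω) x' v) with hudef
    have hpair : ContinuousOn (fun s : ℝ => ((s, x') : ℝ × (Fin d → ℝ)))
        (Set.Icc (0:ℝ) T) := (continuous_id.prodMk continuous_const).continuousOn
    have hmapsto : ∀ s ∈ Set.Icc (0:ℝ) T,
        ((s, x') : ℝ × (Fin d → ℝ)) ∈ (Set.Icc (0:ℝ) T) ×ˢ (Set.univ : Set (Fin d → ℝ)) :=
      fun s hs => ⟨hs, trivial⟩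
    have hucont : ContinuousOn u (Set.Icc 0 T) := by
      have h1 : ContinuousOn (fun s : ℝ => fderiv ℝ (fun y => X y s ω) x')
          (Set.Icc (0:ℝ) T) := (hXC01 ω).2.2.comp hpair hmapsto
      exact hNdc.comp_continuousOn
        (((ContinuousLinearMap.apply ℝ (Fin d → ℝ) v).continuous).comp_continuousOn h1)
    have hunn : ∀ s ∈ Set.Icc (0:ℝ) T, 0 ≤ u s := fun s _ => hNnn _
    have hXcont : ContinuousOn (fun s : ℝ => Nd (X x' s ω)) (Set.Icc (0:ℝ) T) := by
      exact hNdc.comp_continuousOn ((hXC01 ω).1.comp hpair hmapsto)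
    have hineq : ∀ t' ∈ Set.Icc (0:ℝ) T, u t' ≤ Nd v + B * ∫ s in (0:ℝ)..t', u s := by
      intro t' ht'
      have h0 := hder x' v t' ht' ω
      have hIcc : Set.Icc (0:ℝ) t' ⊆ Set.Icc (0:ℝ) T :=
        Set.Icc_subset_Icc le_rfl ht'.2
      have hint1 : IntervalIntegrable
          (fun s => (1 + Nd (X x' s ω) ^ κ) * u s) volume 0 t' := by
        apply ContinuousOn.intervalIntegrable
        rw [Set.uIcc_of_le ht'.1]
        exact ((continuousOn_const.add ((hXcont.mono hIcc).rpow_const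
          (fun s _ => Or.inr hκ))).mul (hucont.mono hIcc))
      have hint2 : IntervalIntegrable
          (fun s => (1 + Mr ω ^ κ) * u s) volume 0 t' := by
        apply ContinuousOn.intervalIntegrable
        rw [Set.uIcc_of_le ht'.1]
        exact continuousOn_const.mul (hucont.mono hIcc)
      have hmono : (∫ s in (0:ℝ)..t', (1 + Nd (X x' s ω) ^ κ) * u s)
          ≤ ∫ s in (0:ℝ)..t', (1 + Mr ω ^ κ) * u s := by
        apply intervalIntegral.integral_mono_on ht'.1 hint1 hint2
        intro s hs
        have hsT : s ∈ Set.Icc (0:ℝ) T := hIcc hs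
        apply mul_le_mul_of_nonneg_right _ (hNnn _)
        have : Nd (X x' s ω) ^ κ ≤ Mr ω ^ κ :=
          Real.rpow_le_rpow (hNnn _) (hMdom ω x' hx' s hsT) hκ
        linarith
      have hpull : (∫ s in (0:ℝ)..t', (1 + Mr ω ^ κ) * u s)
          = (1 + Mr ω ^ κ) * ∫ s in (0:ℝ)..t', u s :=
        intervalIntegral.integral_const_mul _ _
      calc u t' ≤ Nd v + κ * ∫ s in (0:ℝ)..t', (1 + Nd (X x' s ω) ^ κ) * u s := h0
        _ ≤ Nd v + κ * ∫ s in (0:ℝ)..t', (1 + Mr ω ^ κ) * u s := by nlinarith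
        _ = Nd v + B * ∫ s in (0:ℝ)..t', u s := by rw [hpull, hBdef]; ring
    have hfin := gronwall_int hT (hNnn v) hBnn u hucont hunn hineq t ht
    calc u t ≤ Nd v * Real.exp (B * t) := hfin
      _ ≤ Nd v * Real.exp (B * T) := by
          apply mul_le_mul_of_nonneg_left _ (hNnn v)
          exact Real.exp_le_exp.mpr (mul_le_mul_of_nonneg_left ht.2 hBnn)
  -- mean value bound
  have hdiffb : ∀ (h : Fin d → ℝ), Nd h ≤ 1 → ∀ x : Fin d → ℝ, Nd x ≤ R →
      ∀ t ∈ Set.Icc (0:ℝ) T, ∀ ω,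
      Nd (X (x+h) t ω - X x t ω) ≤
        (C₂/c₁) * (Nd h * Real.exp (κ * (1 + Mr ω ^ κ) * T)) := by
    intro h hh1 x hx t ht ω
    set Ex : ℝ := Real.exp (κ * (1 + Mr ω ^ κ) * T) with hExdef
    have hExpos : 0 < Ex := Real.exp_pos _
    set g : ℝ → (Fin d → ℝ) := fun s => X (x + s • h) t ω with hgdef
    set g' : ℝ → (Fin d → ℝ) := fun s => fderiv ℝ (fun y => X y t ω) (x + s • h) h with hg'def
    have hgd : ∀ s ∈ Set.Icc (0:ℝ) 1, HasDerivWithinAt g (g' s) (Set.Icc 0 1) s := by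
      intro s _
      have hpath : HasDerivAt (fun s : ℝ => x + s • h) h s := by
        simpa using ((hasDerivAt_id s).smul_const h).const_add x
      have hXd : HasFDerivAt (fun y => X y t ω)
          (fderiv ℝ (fun y => X y t ω) (x + s • h)) (x + s • h) :=
        ((hXC01 ω).2.1 t ht (x + s • h)).hasFDerivAt
      exact (hXd.comp_hasDerivAt s hpath).hasDerivWithinAt
    have hbound : ∀ s ∈ Set.Ico (0:ℝ) 1, ‖g' s‖ ≤ (Nd h * Ex) / c₁ := by
      intro s hs
      have hxs : Nd (x + s • h) ≤ R + 1 := by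
        have h1 := hNd.2.2 x (s • h)
        have h2 := hNd.2.1 s h
        have habs : |s| ≤ 1 := by
          rw [abs_of_nonneg hs.1]; exact hs.2.le
        nlinarith [hNnn h]
      have h3 := hgron ω (x + s • h) hxs t ht h
      have h4 := hc₁le (g' s)
      rw [le_div_iff₀ hc₁pos]
      calc ‖g' s‖ * c₁ = c₁ * ‖g' s‖ := mul_comm _ _
        _ ≤ Nd (g' s) := h4
        _ ≤ Nd h * Ex := h3
    have hkey := norm_image_sub_le_of_norm_deriv_le_segment' hgd hbound 1
      (Set.right_mem_Icc.mpr zero_le_one)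
    have hg1 : g 1 = X (x + h) t ω := by simp [hgdef]
    have hg0 : g 0 = X x t ω := by simp [hgdef]
    rw [hg1, hg0] at hkey
    calc Nd (X (x+h) t ω - X x t ω) ≤ C₂ * ‖X (x+h) t ω - X x t ω‖ := hC₂le _
      _ ≤ C₂ * ((Nd h * Ex) / c₁ * (1 - 0)) :=
          mul_le_mul_of_nonneg_left hkey hC₂pos.le
      _ = (C₂/c₁) * (Nd h * Ex) := by field_simp; ring
  -- crude bound
  have hdiff2 : ∀ (h : Fin d → ℝ), Nd h ≤ 1 → ∀ x : Fin d → ℝ, Nd x ≤ R →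
      ∀ t ∈ Set.Icc (0:ℝ) T, ∀ ω,
      Nd (X (x+h) t ω - X x t ω) ≤ 2 * Mr ω := by
    intro h hh1 x hx t ht ω
    have h1 : Nd (X (x+h) t ω - X x t ω) ≤ Nd (X (x+h) t ω) + Nd (X x t ω) := by
      have h2 := hNd.2.2 (X (x+h) t ω) (-(X x t ω))
      have h3 := IsNormAux.neg hNd (X x t ω)
      have h4 : X (x+h) t ω - X x t ω = X (x+h) t ω + (-(X x t ω)) := by abel
      rw [h4]
      linarith
    have h5 : Nd (x + h) ≤ R + 1 := by
      have := hNd.2.2 x h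
      linarith
    have h6 := hMdom ω (x+h) h5 t ht
    have h7 := hMdom ω x (by linarith) t ht
    linarith

  rcases eq_or_lt_of_le hκ with hκ0 | hκpos
  · -- case κ = 0
    refine ⟨(C₂/c₁) * (D+1), by positivity, ?_⟩
    intro h hh0 hh1 x hx t ht
    have hexp1 : ∀ ω, Real.exp (κ * (1 + Mr ω ^ κ) * T) = 1 := by
      intro ω; rw [← hκ0]; simp
    have hpt : ∀ ω, ENNReal.ofReal (Nd (X (x+h) t ω - X x t ω))
        ≤ ENNReal.ofReal ((C₂/c₁) * Nd h) := by
      intro ω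
      apply ENNReal.ofReal_le_ofReal
      have hb := hdiffb h hh1.le x hx t ht ω
      rw [hexp1 ω, mul_one] at hb
      exact hb
    set L : ℝ := -Real.log (Nd h) with hLdef
    have hlogneg := Real.log_neg hh0 hh1
    have hLpos : 0 < L := by rw [hLdef]; linarith
    have habs : |Real.log (Nd h)| = L := by rw [hLdef, abs_of_neg hlogneg]
    have hLq : 0 < L ^ q := Real.rpow_pos_of_pos hLpos q
    have hreal : (C₂/c₁) * Nd h ≤ (C₂/c₁) * (D+1) * |Real.log (Nd h)| ^ (-q) := by
      rw [habs, Real.rpow_neg hLpos.le, ← div_eq_mul_inv, le_div_iff₀ hLq]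
      have hη : Nd h = Real.exp (-L) := by
        rw [hLdef, neg_neg, Real.exp_log hh0]
      have hd1 : L ^ q * Real.exp (-(L/2)) ≤ D := hDle L hLpos.le
      have hd2 : Real.exp (-L) ≤ Real.exp (-(L/2)) := by
        apply Real.exp_le_exp.mpr; linarith
      have hd3 : Nd h * L ^ q ≤ D := by
        rw [hη]
        nlinarith [Real.exp_pos (-L), Real.exp_pos (-(L/2))]
      have hcc : 0 < C₂/c₁ := by positivity
      nlinarith
    calc (∫⁻ ω, ENNReal.ofReal (Nd (X (x + h) t ω - X x t ω)) ∂P)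
        ≤ ∫⁻ _, ENNReal.ofReal ((C₂/c₁) * Nd h) ∂P := lintegral_mono hpt
      _ = ENNReal.ofReal ((C₂/c₁) * Nd h) := by
          rw [lintegral_const, measure_univ, mul_one]
      _ ≤ ENNReal.ofReal ((C₂/c₁) * (D+1) * |Real.log (Nd h)| ^ (-q)) :=
          ENNReal.ofReal_le_ofReal hreal
  · -- case κ > 0
    set n : ℕ := ⌈q*κ⌉₊ + 1 with hndef
    have hnq : q ≤ (n:ℝ)/κ := by
      rw [le_div_iff₀ hκpos]
      have h1 := Nat.le_ceil (q*κ)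
      have h2 : ((⌈q*κ⌉₊:ℕ):ℝ) ≤ (n:ℝ) := by
        rw [hndef]; push_cast; linarith
      linarith
    have hμ : (∫⁻ ω, (M ω)^(n+1) ∂P) ≠ ⊤ := (hMn (n+1) (Nat.succ_pos n)).ne
    set m₀ : ℝ := (∫⁻ ω, (M ω)^(n+1) ∂P).toReal with hm₀def
    have hm₀nn : 0 ≤ m₀ := ENNReal.toReal_nonneg
    have hμeq : (∫⁻ ω, (M ω)^(n+1) ∂P) = ENNReal.ofReal m₀ :=
      (ENNReal.ofReal_toReal hμ).symm
    set T₁ : ℝ := max T 1 with hT₁def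
    have hT₁pos : (0:ℝ) < T₁ := lt_of_lt_of_le one_pos (le_max_right _ _)
    have hTT₁ : T ≤ T₁ := le_max_left _ _
    set E₀ : ℝ := Real.exp (κ*T) with hE₀def
    have hE₀pos : 0 < E₀ := Real.exp_pos _
    set C₁ : ℝ := C₂/c₁ with hC₁def
    have hC₁pos : 0 < C₁ := by positivity
    set A₁ : ℝ := C₁ * E₀ * Real.exp 1 * (D+1) with hA₁def
    set A₂ : ℝ := 2 * m₀ * (2*κ*T₁) ^ ((n:ℝ)/κ) with hA₂def
    have hA₁pos : 0 < A₁ := by positivity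
    have hA₂nn : 0 ≤ A₂ := by positivity
    refine ⟨A₁ + A₂, by positivity, ?_⟩
    intro h hh0 hh1 x hx t ht
    set η : ℝ := Nd h with hηdef
    set L : ℝ := -Real.log η with hLdef
    have hlogneg := Real.log_neg hh0 hh1
    have hLpos : 0 < L := by rw [hLdef]; linarith
    have habs : |Real.log η| = L := by rw [hLdef, abs_of_neg hlogneg]
    have hLq : 0 < L ^ q := Real.rpow_pos_of_pos hLpos q
    have hLqinv : L ^ (-q) = (L ^ q)⁻¹ := Real.rpow_neg hLpos.le q
    set Lm : ℝ := max L 1 with hLmdef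
    have hLm1 : 1 ≤ Lm := le_max_right _ _
    have hLmpos : 0 < Lm := lt_of_lt_of_le one_pos hLm1
    have hbase : (0:ℝ) < Lm/(2*κ*T₁) := by positivity
    set K : ℝ := (Lm/(2*κ*T₁)) ^ (1/κ) with hKdef
    have hKpos : 0 < K := Real.rpow_pos_of_pos hbase _
    have hKκ : K ^ κ = Lm/(2*κ*T₁) := by
      rw [hKdef, ← Real.rpow_mul hbase.le, one_div_mul_cancel hκpos.ne', Real.rpow_one]
    set A₁' : ℝ := C₁ * E₀ * Real.exp (Lm/2) * η with hA₁'def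
    have hA₁'nn : 0 ≤ A₁' := by positivity
    set S : Set Ω := {ω | M ω ≤ ENNReal.ofReal K} with hSdef
    have hSmeas : MeasurableSet S := hMmeas measurableSet_Iic
    have hKne0 : ENNReal.ofReal K ≠ 0 := (ENNReal.ofReal_pos.mpr hKpos).ne'
    have hKneT : ENNReal.ofReal K ≠ ⊤ := ENNReal.ofReal_ne_top
    -- pointwise bound
    have step1 : ∀ ω, ENNReal.ofReal (Nd (X (x+h) t ω - X x t ω)) ≤
        S.indicator (fun _ => ENNReal.ofReal A₁') ω
          + Sᶜ.indicator (fun ω' => 2 * M ω') ω := by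
      intro ω
      by_cases hω : ω ∈ S
      · rw [Set.indicator_of_mem hω,
          Set.indicator_of_notMem (Set.notMem_compl_iff.mpr hω), add_zero]
        apply ENNReal.ofReal_le_ofReal
        have hMrK : Mr ω ≤ K := by
          have h1 : (M ω).toReal ≤ (ENNReal.ofReal K).toReal :=
            ENNReal.toReal_mono hKneT hω
          rwa [ENNReal.toReal_ofReal hKpos.le] at h1
        have hMκ : Mr ω ^ κ ≤ K ^ κ := Real.rpow_le_rpow (hMrnn ω) hMrK hκ
        have hKκ' : κ * T * (K ^ κ) ≤ Lm / 2 := by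
          rw [hKκ]
          have heq2 : κ*T*(Lm/(2*κ*T₁)) = (T/T₁)*(Lm/2) := by
            field_simp
          rw [heq2]
          have hT1 : T/T₁ ≤ 1 := div_le_one_of_le₀ hTT₁ hT₁pos.le
          nlinarith
        have hexp : Real.exp (κ * (1 + Mr ω ^ κ) * T) ≤ E₀ * Real.exp (Lm/2) := by
          rw [hE₀def, ← Real.exp_add]
          apply Real.exp_le_exp.mpr
          have heq3 : κ * (1 + Mr ω ^ κ) * T = κ*T + κ*T*(Mr ω ^ κ) := by ring
          rw [heq3]
          have h2 : κ*T*(Mr ω ^ κ) ≤ κ*T*(K^κ) :=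
            mul_le_mul_of_nonneg_left hMκ (by positivity)
          linarith
        calc Nd (X (x+h) t ω - X x t ω)
            ≤ C₁ * (η * Real.exp (κ * (1 + Mr ω ^ κ) * T)) := hdiffb h hh1.le x hx t ht ω
          _ ≤ C₁ * (η * (E₀ * Real.exp (Lm/2))) := by
              apply mul_le_mul_of_nonneg_left _ hC₁pos.le
              apply mul_le_mul_of_nonneg_left hexp (hNnn h)
          _ = A₁' := by rw [hA₁'def]; ring
      · rw [Set.indicator_of_notMem hω, Set.indicator_of_mem (Set.mem_compl hω), zero_add]
        have h2 := hdiff2 h hh1.le x hx t ht ω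
        calc ENNReal.ofReal (Nd (X (x+h) t ω - X x t ω))
            ≤ ENNReal.ofReal (2 * Mr ω) := ENNReal.ofReal_le_ofReal h2
          _ = 2 * M ω := by
              rw [ENNReal.ofReal_mul (by norm_num)]
              congr 1
              · exact ENNReal.ofReal_ofNat 2
              · rw [hMrdef]
                exact ENNReal.ofReal_toReal (hMtop ω)
    have step2 : (∫⁻ ω, S.indicator (fun _ => ENNReal.ofReal A₁') ω ∂P)
        ≤ ENNReal.ofReal A₁' := by
      rw [lintegral_indicator hSmeas, setLIntegral_const]
      calc ENNReal.ofReal A₁' * P S ≤ ENNReal.ofReal A₁' * 1 :=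
            mul_le_mul_right prob_le_one _
        _ = ENNReal.ofReal A₁' := mul_one _
    have step3 : (∫⁻ ω, Sᶜ.indicator (fun ω' => 2 * M ω') ω ∂P)
        ≤ 2 * ((ENNReal.ofReal K)⁻¹^n * ENNReal.ofReal m₀) := by
      have hrne : (2:ℝ≥0∞) * (ENNReal.ofReal K)⁻¹^n ≠ ⊤ :=
        ENNReal.mul_ne_top (by norm_num)
          (ENNReal.pow_ne_top (ENNReal.inv_ne_top.mpr hKne0))
      have hptS : ∀ ω ∈ Sᶜ, 2 * M ω ≤ (2 * (ENNReal.ofReal K)⁻¹^n) * (M ω)^(n+1) := by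
        intro ω hω
        have hlt : ENNReal.ofReal K < M ω := by
          rw [Set.mem_compl_iff, hSdef, Set.mem_setOf_eq] at hω
          exact lt_of_not_ge hω
        rw [mul_assoc]
        apply mul_le_mul_right
        calc M ω = ((ENNReal.ofReal K)⁻¹ * ENNReal.ofReal K)^n * M ω := by
              rw [ENNReal.inv_mul_cancel hKne0 hKneT, one_pow, one_mul]
          _ = (ENNReal.ofReal K)⁻¹^n * ((ENNReal.ofReal K)^n * M ω) := by
              rw [mul_pow, mul_assoc]
          _ ≤ (ENNReal.ofReal K)⁻¹^n * ((M ω)^n * M ω) := by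
              apply mul_le_mul_right
              exact mul_le_mul_left (pow_le_pow_left' hlt.le n) _
          _ = (ENNReal.ofReal K)⁻¹^n * (M ω)^(n+1) := by rw [pow_succ (M ω) n]
      calc (∫⁻ ω, Sᶜ.indicator (fun ω' => 2 * M ω') ω ∂P)
          = ∫⁻ ω in Sᶜ, 2 * M ω ∂P := lintegral_indicator hSmeas.compl _
        _ ≤ ∫⁻ ω in Sᶜ, (2 * (ENNReal.ofReal K)⁻¹^n) * (M ω)^(n+1) ∂P :=
            setLIntegral_mono' hSmeas.compl hptS
        _ = (2 * (ENNReal.ofReal K)⁻¹^n) * ∫⁻ ω in Sᶜ, (M ω)^(n+1) ∂P :=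
            lintegral_const_mul' _ _ hrne
        _ ≤ (2 * (ENNReal.ofReal K)⁻¹^n) * ∫⁻ ω, (M ω)^(n+1) ∂P :=
            mul_le_mul_right (setLIntegral_le_lintegral _ _) _
        _ = 2 * ((ENNReal.ofReal K)⁻¹^n * ENNReal.ofReal m₀) := by
            rw [hμeq, mul_assoc]
    have step4 : A₁' ≤ A₁ * L^(-q) := by
      rw [hLqinv, ← div_eq_mul_inv, le_div_iff₀ hLq]
      have hexpe : (2:ℝ) ≤ Real.exp 1 := by
        have := Real.add_one_le_exp (1:ℝ)
        linarith
      rcases le_or_gt 1 L with hL1 | hL1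
      · have hLm : Lm = L := max_eq_left hL1
        have hη : η = Real.exp (-L) := by
          have : Real.log η = -L := by rw [hLdef]; ring
          rw [← this, Real.exp_log hh0]
        have he : Real.exp (Lm/2) * η = Real.exp (-(L/2)) := by
          rw [hLm, hη, ← Real.exp_add]
          congr 1
          ring
        have hdec := hDle L (by linarith)
        calc A₁' * L^q = C₁*E₀*(Real.exp (Lm/2) * η) * L^q := by rw [hA₁'def]; ring
          _ = C₁*E₀*(L^q * Real.exp (-(L/2))) := by rw [he]; ring
          _ ≤ C₁*E₀*D := by
              apply mul_le_mul_of_nonneg_left hdec (by positivity)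
          _ ≤ A₁ := by
              rw [hA₁def]
              have hDe : D ≤ Real.exp 1 * (D+1) := by nlinarith
              calc C₁*E₀*D ≤ C₁*E₀*(Real.exp 1 * (D+1)) :=
                    mul_le_mul_of_nonneg_left hDe (by positivity)
                _ = C₁ * E₀ * Real.exp 1 * (D+1) := by ring
      · have hLm : Lm = 1 := max_eq_right hL1.le
        have hq1 : L^q ≤ 1 := Real.rpow_le_one hLpos.le hL1.le hq
        have hη1 : η ≤ 1 := hh1.le
        have hηnn : 0 ≤ η := hNnn h
        have hee : Real.exp (Lm/2) ≤ Real.exp 1 := by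
          apply Real.exp_le_exp.mpr
          rw [hLm]; norm_num
        have hA₁'le : A₁' ≤ C₁ * E₀ * Real.exp 1 := by
          rw [hA₁'def]
          calc C₁ * E₀ * Real.exp (Lm/2) * η ≤ C₁ * E₀ * Real.exp (Lm/2) * 1 := by
                apply mul_le_mul_of_nonneg_left hη1 (by positivity)
            _ = C₁ * E₀ * Real.exp (Lm/2) := mul_one _
            _ ≤ C₁ * E₀ * Real.exp 1 := by
                apply mul_le_mul_of_nonneg_left hee (by positivity)
        calc A₁' * L^q ≤ A₁' * 1 := mul_le_mul_of_nonneg_left hq1 hA₁'nn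
          _ = A₁' := mul_one _
          _ ≤ C₁ * E₀ * Real.exp 1 := hA₁'le
          _ ≤ A₁ := by
              rw [hA₁def]
              have h1e : (1:ℝ) ≤ D + 1 := by linarith
              calc C₁ * E₀ * Real.exp 1 = C₁ * E₀ * Real.exp 1 * 1 := (mul_one _).symm
                _ ≤ C₁ * E₀ * Real.exp 1 * (D+1) :=
                    mul_le_mul_of_nonneg_left h1e (by positivity)
    have step5 : 2 * (K⁻¹^n * m₀) ≤ A₂ * L^(-q) := by
      have hKinv : K⁻¹^n = (2*κ*T₁) ^ ((n:ℝ)/κ) / Lm ^ ((n:ℝ)/κ) := by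
        rw [inv_pow, ← Real.rpow_natCast K n, hKdef, ← Real.rpow_mul hbase.le]
        have hexps : 1/κ * (n:ℝ) = (n:ℝ)/κ := by ring
        rw [hexps, Real.div_rpow hLmpos.le (by positivity), inv_div]
      have hLmq : 1 / Lm ^ ((n:ℝ)/κ) ≤ L^(-q) := by
        rw [hLqinv, one_div]
        rcases le_or_gt 1 L with hL1 | hL1
        · have hLm : Lm = L := max_eq_left hL1
          rw [hLm]
          apply inv_anti₀ hLq
          exact Real.rpow_le_rpow_of_exponent_le hL1 hnq
        · have hLm : Lm = 1 := max_eq_right hL1.le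
          rw [hLm, Real.one_rpow, inv_one]
          have hq1 : L^q ≤ 1 := Real.rpow_le_one hLpos.le hL1.le hq
          have h2 : (L^q) * (L^q)⁻¹ = 1 := mul_inv_cancel₀ hLq.ne'
          nlinarith [inv_pos.mpr hLq]
      calc 2 * (K⁻¹^n * m₀)
          = A₂ * (1 / Lm ^ ((n:ℝ)/κ)) := by
            rw [hKinv, hA₂def]
            field_simp
        _ ≤ A₂ * L^(-q) := mul_le_mul_of_nonneg_left hLmq hA₂nn
    calc (∫⁻ ω, ENNReal.ofReal (Nd (X (x + h) t ω - X x t ω)) ∂P)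
        ≤ ∫⁻ ω, (S.indicator (fun _ => ENNReal.ofReal A₁') ω
          + Sᶜ.indicator (fun ω' => 2 * M ω') ω) ∂P := lintegral_mono step1
      _ = (∫⁻ ω, S.indicator (fun _ => ENNReal.ofReal A₁') ω ∂P)
          + (∫⁻ ω, Sᶜ.indicator (fun ω' => 2 * M ω') ω ∂P) :=
          lintegral_add_left (measurable_const.indicator hSmeas) _
      _ ≤ ENNReal.ofReal A₁' + 2 * ((ENNReal.ofReal K)⁻¹^n * ENNReal.ofReal m₀) :=
          add_le_add step2 step3
      _ = ENNReal.ofReal A₁' + ENNReal.ofReal (2 * (K⁻¹^n * m₀)) := by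
          congr 1
          have heq4 : ENNReal.ofReal (2 * (K⁻¹^n * m₀))
              = 2 * ((ENNReal.ofReal K)⁻¹^n * ENNReal.ofReal m₀) := by
            rw [ENNReal.ofReal_mul (by norm_num : (0:ℝ) ≤ 2),
              ENNReal.ofReal_mul (by positivity), ENNReal.ofReal_pow (by positivity),
              ENNReal.ofReal_inv_of_pos hKpos, ENNReal.ofReal_ofNat]
          rw [heq4]
      _ ≤ ENNReal.ofReal (A₁ * L^(-q)) + ENNReal.ofReal (A₂ * L^(-q)) :=
          add_le_add (ENNReal.ofReal_le_ofReal step4) (ENNReal.ofReal_le_ofReal step5)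
      _ = ENNReal.ofReal ((A₁ + A₂) * |Real.log η| ^ (-q)) := by
          rw [habs, ← ENNReal.ofReal_add (by positivity) (by positivity)]
          ring_nf
end
end

section
/- Let d,m ∈ ℕ, T ∈ [0,∞), let μ ∈ C¹(ℝ^d,ℝ^d), σ ∈ ℝ^{d×m}, φ ∈ C(ℝ^m,[0,∞)), V ∈ C¹(ℝ^d,[0,∞)), let ‖·‖ be a norm on ℝ^d, assume for all x ∈ ℝ^d and z ∈ ℝ^m that V'(x)μ(x+σz) ≤ φ(z)V(x) and ‖x‖ ≤ V(x), let (Ω,ℱ,ℙ) be a probability space, let W: [0,T]×Ω → ℝ^m be a stochastic process with continuous sample paths, let X^x: [0,T]×Ω → ℝ^d, x ∈ ℝ^d, be stochastic processes with continuous sample paths, assume for all c ∈ [0,∞) that E[sup_{t∈[0,T]∩ℚ} exp(c·φ(W(t)))] + E[sup_{t∈[0,T]∩ℚ} ‖σW(t)‖^c] < ∞, and assume for all x ∈ ℝ^d, t ∈ [0,T], ω ∈ Ω that X^x(t,ω) = x + ∫₀^t μ(X^x(s,ω)) ds + σW(t,ω). Then (i) for all R,r ∈ [0,∞) the map Ω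 ∋ ω ↦ sup_{x: ‖x‖≤R} sup_{t∈[0,T]} ‖X^x(t,ω)‖^r ∈ [0,∞] is ℱ/ℬ([0,∞])-measurable, and (ii) for all R,r ∈ [0,∞) it holds that E[sup_{x: ‖x‖≤R} sup_{t∈[0,T]} ‖X^x(t)‖^r] < ∞. -/
open MeasureTheory ProbabilityTheory Filter
open scoped ENNReal NNReal
open Set Topology

noncomputable section

namespace SDEAux

variable {E : Type*} [AddCommGroup E] [Module ℝ E] {N : E → ℝ}

lemma _root_.IsNorm.zero' (h : IsNorm N) : N 0 = 0 := (h.1 0).2 rfl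

lemma _root_.IsNorm.neg' (h : IsNorm N) (x : E) : N (-x) = N x := by
  have := h.2.1 (-1) x; simpa using this

lemma _root_.IsNorm.nonneg' (h : IsNorm N) (x : E) : 0 ≤ N x := by
  have h1 := h.2.2 x (-x)
  rw [add_neg_cancel, h.zero', h.neg'] at h1
  linarith

lemma _root_.IsNorm.sub_le' (h : IsNorm N) (x y : E) : N x ≤ N y + N (x - y) := by
  have := h.2.2 y (x - y); simpa using this

lemma _root_.IsNorm.abs_sub_le (h : IsNorm N) (x y : E) : |N x - N y| ≤ N (x - y) := by
  rw [abs_sub_le_iff]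
  constructor
  · have := h.sub_le' x y; linarith
  · have := h.sub_le' y x
    have h2 : N (y - x) = N (x - y) := by rw [← h.neg' (y - x)]; congr 1; abel
    linarith

lemma _root_.IsNorm.sum_le (h : IsNorm N) {ι : Type*} (s : Finset ι) (f : ι → E) :
    N (∑ i ∈ s, f i) ≤ ∑ i ∈ s, N (f i) := by
  classical
  induction s using Finset.induction with
  | empty => simp [h.zero']
  | insert _ _ hx ih =>
    rw [Finset.sum_insert hx, Finset.sum_insert hx]
    exact (h.2.2 _ _).trans (by linarith)

variable {d : ℕ}

lemma isNorm_upper {N : (Fin d → ℝ) → ℝ} (h : IsNorm N) :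
    ∃ C : ℝ, 0 < C ∧ ∀ x, N x ≤ C * ‖x‖ := by
  have hs : 0 ≤ ∑ i, N (Pi.single i 1) := Finset.sum_nonneg fun i _ => h.nonneg' _
  refine ⟨(∑ i, N (Pi.single i 1)) + 1, by linarith, fun x => ?_⟩
  have hx : x = ∑ i, Pi.single i (x i) := (Finset.univ_sum_single x).symm
  calc N x ≤ ∑ i, N (Pi.single i (x i)) := by
        conv_lhs => rw [hx]
        exact h.sum_le _ _
    _ ≤ ∑ i, ‖x‖ * N (Pi.single i 1) := by
        refine Finset.sum_le_sum fun i _ => ?_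
        have : (Pi.single i (x i) : Fin d → ℝ) = (x i) • (Pi.single i 1 : Fin d → ℝ) := by
          funext j
          by_cases hj : j = i
          · subst hj; simp
          · simp [Pi.single_apply, hj]
        rw [this, h.2.1]
        have h1 : |x i| ≤ ‖x‖ := by
          have := norm_le_pi_norm x i
          simpa using this
        exact mul_le_mul_of_nonneg_right h1 (h.nonneg' _)
    _ = (∑ i, N (Pi.single i 1)) * ‖x‖ := by rw [← Finset.mul_sum, mul_comm]
    _ ≤ ((∑ i, N (Pi.single i 1)) + 1) * ‖x‖ := by
        have := norm_nonneg x; nlinarith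

lemma isNorm_continuous {N : (Fin d → ℝ) → ℝ} (h : IsNorm N) : Continuous N := by
  obtain ⟨C, hC, hb⟩ := isNorm_upper h
  rw [Metric.continuous_iff]
  intro x ε hε
  refine ⟨ε / C, by positivity, fun y hy => ?_⟩
  rw [Real.dist_eq]
  calc |N y - N x| ≤ N (y - x) := h.abs_sub_le _ _
    _ ≤ C * ‖y - x‖ := hb _
    _ < C * (ε / C) := by
        apply mul_lt_mul_of_pos_left _ hC
        rwa [← dist_eq_norm]
    _ = ε := by field_simp

lemma isNorm_lower {N : (Fin d → ℝ) → ℝ} (hd : 0 < d) (h : IsNorm N) :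
    ∃ c : ℝ, 0 < c ∧ ∀ x, c * ‖x‖ ≤ N x := by
  have : Nonempty (Fin d) := ⟨⟨0, hd⟩⟩
  have hne : (Metric.sphere (0 : Fin d → ℝ) 1).Nonempty :=
    NormedSpace.sphere_nonempty.mpr zero_le_one
  obtain ⟨z, hz, hmin⟩ := (isCompact_sphere (0 : Fin d → ℝ) 1).exists_isMinOn hne
    (isNorm_continuous h).continuousOn
  have hz1 : ‖z‖ = 1 := by simpa using hz
  have hzpos : 0 < N z := by
    rcases (h.nonneg' z).lt_or_eq with h' | h'
    · exact h'
    · exfalso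
      have : z = 0 := (h.1 z).1 h'.symm
      rw [this] at hz1; simp at hz1
  refine ⟨N z, hzpos, fun x => ?_⟩
  rcases eq_or_ne x 0 with rfl | hx
  · simp [h.zero']
  · have hxn : (0:ℝ) < ‖x‖ := norm_pos_iff.mpr hx
    have hu : ‖x‖⁻¹ • x ∈ Metric.sphere (0 : Fin d → ℝ) 1 := by
      simp [norm_smul, abs_of_pos (inv_pos.mpr hxn), inv_mul_cancel₀ hxn.ne']
    have := hmin hu
    have heq : N x = ‖x‖ * N (‖x‖⁻¹ • x) := by
      rw [h.2.1, abs_of_pos (inv_pos.mpr hxn)]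
      field_simp
    rw [heq]
    calc N z * ‖x‖ = ‖x‖ * N z := mul_comm _ _
      _ ≤ ‖x‖ * N (‖x‖⁻¹ • x) := mul_le_mul_of_nonneg_left this hxn.le

-- approximating sequences
lemma exists_ratIcc_seq {T : ℝ} (hT : 0 ≤ T) {t : ℝ} (ht : t ∈ Set.Icc (0:ℝ) T) :
    ∃ u : ℕ → ℝ, (∀ n, u n ∈ ratIcc T) ∧ Tendsto u atTop (𝓝 t) := by
  rcases eq_or_lt_of_le ht.1 with h0 | h0
  · exact ⟨fun _ => 0, fun n => ⟨⟨le_refl _, hT⟩, ⟨0, by simp⟩⟩, by rw [← h0]; exact tendsto_const_nhds⟩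
  · have hsel : ∀ n : ℕ, ∃ q : ℚ, max (t - 1/(n+1)) (t/2) < q ∧ (q:ℝ) < t := by
      intro n
      apply exists_rat_btwn
      apply max_lt _ (by linarith)
      have : (0:ℝ) < 1/(n+1) := by positivity
      linarith
    choose q hq1 hq2 using hsel
    refine ⟨fun n => (q n : ℝ), fun n => ⟨⟨?_, ?_⟩, ⟨q n, rfl⟩⟩, ?_⟩
    · have := hq1 n; have : t/2 < (q n : ℝ) := lt_of_le_of_lt (le_max_right _ _) this
      linarith
    · exact le_trans (hq2 n).le ht.2
    · apply tendsto_of_tendsto_of_tendsto_of_le_of_le (g := fun n : ℕ => max (t - 1/(n+1)) (t/2))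
        (h := fun _ : ℕ => t)
      · have h1 : Tendsto (fun n : ℕ => t - 1/(n+1:ℝ)) atTop (𝓝 (t - 0)) := by
          apply Tendsto.const_sub
          exact tendsto_one_div_add_atTop_nhds_zero_nat
        have := h1.max (tendsto_const_nhds (x := t/2) (f := atTop (α := ℕ)))
        rw [sub_zero] at this
        simpa [max_eq_left (by linarith : t/2 ≤ t)] using this
      · exact tendsto_const_nhds
      · exact fun n => (hq1 n).le
      · exact fun n => (hq2 n).le

lemma le_biSup_of_seq {α : Type*} (s : Set α) (g : α → ℝ) {u : ℕ → α} (hu : ∀ n, u n ∈ s)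
    {a : ℝ} (h : Tendsto (fun n => g (u n)) atTop (𝓝 a)) :
    ENNReal.ofReal a ≤ ⨆ z ∈ s, ENNReal.ofReal (g z) := by
  have : Tendsto (fun n => ENNReal.ofReal (g (u n))) atTop (𝓝 (ENNReal.ofReal a)) :=
    (ENNReal.continuous_ofReal.tendsto a).comp h
  refine le_of_tendsto this (Eventually.of_forall fun n => ?_)
  exact le_iSup₂ (f := fun z (_ : z ∈ s) => ENNReal.ofReal (g z)) (u n) (hu n)

end SDEAux

namespace SDEAux

lemma exists_ratBall_mem {d : ℕ} {N : (Fin d → ℝ) → ℝ} (hN : IsNorm N)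
    {c₂ : ℝ} (hc₂ : 0 < c₂) (hb : ∀ x, N x ≤ c₂ * ‖x‖)
    {R : ℝ} (hR : 0 ≤ R) {x : Fin d → ℝ} (hx : N x ≤ R) {ε : ℝ} (hε : 0 < ε) :
    ∃ y ∈ ratBall d N R, dist y x < ε := by
  rcases eq_or_lt_of_le (hN.nonneg' x) with h0 | h0
  · have hx0 : x = 0 := (hN.1 x).1 h0.symm
    refine ⟨0, ⟨fun i => ⟨0, by simp⟩, by rw [hN.zero']; exact hR⟩, ?_⟩
    rw [hx0]; simpa using hε
  · have hRpos : 0 < R := lt_of_lt_of_le h0 hx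
    set δ : ℝ := min (1/2) (ε / (2 * (‖x‖ + 1))) with hδdef
    have hδpos : 0 < δ := by
      apply lt_min (by norm_num)
      have : (0:ℝ) < ‖x‖ + 1 := by positivity
      positivity
    have hδle : δ ≤ 1/2 := min_le_left _ _
    set x' : Fin d → ℝ := (1 - δ) • x with hx'def
    have hNx' : N x' ≤ (1 - δ) * R := by
      rw [hx'def, hN.2.1, abs_of_pos (by linarith : (0:ℝ) < 1 - δ)]
      exact mul_le_mul_of_nonneg_left hx (by linarith)
    have hxx' : ‖x' - x‖ ≤ ε / 2 := by
      have : x' - x = (-δ) • x := by rw [hx'def]; module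
      rw [this, norm_smul]
      simp only [norm_neg, Real.norm_eq_abs, abs_of_pos hδpos, abs_neg]
      have h1 : δ ≤ ε / (2 * (‖x‖ + 1)) := min_le_right _ _
      have h2 : 0 ≤ ‖x‖ := norm_nonneg x
      calc δ * ‖x‖ ≤ (ε / (2 * (‖x‖ + 1))) * (‖x‖ + 1) := by
            apply mul_le_mul h1 (by linarith) h2
            positivity
        _ = ε / 2 := by field_simp
    set η : ℝ := min (ε / 4) (δ * R / c₂) with hηdef
    have hηpos : 0 < η := lt_min (by positivity) (by positivity)
    have hq : ∀ i : Fin d, ∃ q : ℚ, |x' i - (q:ℝ)| < η := fun i => exists_rat_near (x' i) hηpos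
    choose q hq using hq
    set y : Fin d → ℝ := fun i => (q i : ℝ) with hydef
    have hyx' : ‖y - x'‖ ≤ η := by
      apply pi_norm_le_iff_of_nonneg hηpos.le |>.2
      intro i
      rw [Pi.sub_apply, Real.norm_eq_abs, abs_sub_comm]
      exact (hq i).le
    refine ⟨y, ⟨fun i => ⟨q i, rfl⟩, ?_⟩, ?_⟩
    · calc N y ≤ N x' + N (y - x') := hN.sub_le' y x'
        _ ≤ (1 - δ) * R + c₂ * ‖y - x'‖ := add_le_add hNx' (hb _)
        _ ≤ (1 - δ) * R + c₂ * (δ * R / c₂) := by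
            apply add_le_add_right
            apply mul_le_mul_of_nonneg_left (hyx'.trans (min_le_right _ _)) hc₂.le
        _ = R := by field_simp; ring
    · calc dist y x ≤ ‖y - x'‖ + ‖x' - x‖ := by
            rw [dist_eq_norm]
            calc ‖y - x‖ = ‖(y - x') + (x' - x)‖ := by congr 1; abel
              _ ≤ _ := norm_add_le _ _
        _ ≤ η + ε/2 := add_le_add hyx' hxx'
        _ ≤ ε/4 + ε/2 := by linarith [min_le_left (ε/4) (δ*R/c₂)]
        _ < ε := by linarith

lemma exists_ratBall_seq {d : ℕ} {N : (Fin d → ℝ) → ℝ} (hN : IsNorm N)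
    {c₂ : ℝ} (hc₂ : 0 < c₂) (hb : ∀ x, N x ≤ c₂ * ‖x‖)
    {R : ℝ} (hR : 0 ≤ R) {x : Fin d → ℝ} (hx : N x ≤ R) :
    ∃ v : ℕ → (Fin d → ℝ), (∀ k, v k ∈ ratBall d N R) ∧ Tendsto v atTop (𝓝 x) := by
  have h : ∀ k : ℕ, ∃ y ∈ ratBall d N R, dist y x < 1/(k+1) :=
    fun k => exists_ratBall_mem hN hc₂ hb hR hx (by positivity)
  choose v hv hvd using h
  refine ⟨v, hv, ?_⟩
  rw [tendsto_iff_dist_tendsto_zero]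
  apply squeeze_zero (fun k => dist_nonneg) (fun k => (hvd k).le)
  exact tendsto_one_div_add_atTop_nhds_zero_nat

lemma ratIcc_countable (T : ℝ) : (ratIcc T).Countable :=
  (Set.countable_range _).mono Set.inter_subset_right

lemma ratBall_countable (d : ℕ) (N : (Fin d → ℝ) → ℝ) (R : ℝ) : (ratBall d N R).Countable := by
  have h : ratBall d N R ⊆ {x : Fin d → ℝ | ∀ i, x i ∈ Set.range ((↑) : ℚ → ℝ)} :=
    fun x hx i => hx.1 i
  exact (Set.countable_pi fun i => Set.countable_range _).mono h

lemma ratIcc_subset (T : ℝ) : ratIcc T ⊆ Set.Icc 0 T := Set.inter_subset_left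

end SDEAux

open SDEAux

/-- **Lemma (integrability properties for solutions of additive noise
SDEs).** -/
theorem sde_solution_integrability
    (d m : ℕ) (hd : 0 < d) (hm : 0 < m) (T : ℝ) (hT : 0 ≤ T)
    (μ : (Fin d → ℝ) → (Fin d → ℝ)) (hμ : ContDiff ℝ 1 μ)
    (σ : Matrix (Fin d) (Fin m) ℝ)
    (φ : (Fin m → ℝ) → ℝ) (hφc : Continuous φ) (hφ0 : ∀ z, 0 ≤ φ z)
    (V : (Fin d → ℝ) → ℝ) (hV : ContDiff ℝ 1 V) (hV0 : ∀ x, 0 ≤ V x)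
    (Nd : (Fin d → ℝ) → ℝ) (hNd : IsNorm Nd)
    (hLyap : ∀ (x : Fin d → ℝ) (z : Fin m → ℝ),
      fderiv ℝ V x (μ (x + σ.mulVec z)) ≤ φ z * V x)
    (hNV : ∀ x, Nd x ≤ V x)
    {Ω : Type*} [MeasurableSpace Ω] (P : Measure Ω) [IsProbabilityMeasure P]
    (W : ℝ → Ω → (Fin m → ℝ))
    (hWmeas : ∀ t ∈ Set.Icc (0 : ℝ) T, Measurable (W t))
    (hWcont : ∀ ω, ContinuousOn (fun t => W t ω) (Set.Icc (0 : ℝ) T))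
    (X : (Fin d → ℝ) → ℝ → Ω → (Fin d → ℝ))
    (hXmeas : ∀ x : Fin d → ℝ, ∀ t ∈ Set.Icc (0 : ℝ) T,
      Measurable (fun ω => X x t ω))
    (hXcont : ∀ (x : Fin d → ℝ) (ω : Ω),
      ContinuousOn (fun t => X x t ω) (Set.Icc (0 : ℝ) T))
    (hint : ∀ c : ℝ, 0 ≤ c →
      (∫⁻ ω, (⨆ t ∈ ratIcc T, ENNReal.ofReal (Real.exp (c * φ (W t ω)))) ∂P) +
      (∫⁻ ω, (⨆ t ∈ ratIcc T,
        ENNReal.ofReal (Nd (σ.mulVec (W t ω)) ^ c)) ∂P) < ⊤)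
    (heq : ∀ x : Fin d → ℝ, ∀ t ∈ Set.Icc (0 : ℝ) T, ∀ ω, X x t ω =
      x + (∫ s in (0 : ℝ)..t, μ (X x s ω)) + σ.mulVec (W t ω)) :
    (∀ R r : ℝ, 0 ≤ R → 0 ≤ r →
      Measurable (fun ω => ⨆ x ∈ {z : Fin d → ℝ | Nd z ≤ R},
        ⨆ t ∈ Set.Icc (0 : ℝ) T, ENNReal.ofReal (Nd (X x t ω) ^ r))) ∧
    (∀ R r : ℝ, 0 ≤ R → 0 ≤ r →
      (∫⁻ ω, (⨆ x ∈ {z : Fin d → ℝ | Nd z ≤ R},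
        ⨆ t ∈ Set.Icc (0 : ℝ) T, ENNReal.ofReal (Nd (X x t ω) ^ r)) ∂P) < ⊤) := by
  classical
  obtain ⟨c₂, hc₂pos, hc₂⟩ := isNorm_upper hNd
  obtain ⟨c₁, hc₁pos, hc₁⟩ := isNorm_lower hd hNd
  have hNdcont := isNorm_continuous hNd
  have h0T : (0:ℝ) ∈ Set.Icc (0:ℝ) T := ⟨le_refl _, hT⟩
  have hσcont : Continuous fun v : Fin m → ℝ => σ.mulVec v :=
    σ.mulVecLin.continuous_of_finiteDimensional
  -- clamping map
  set π : ℝ → ℝ := fun s => max 0 (min s T) with hπdef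
  have hπcont : Continuous π := continuous_const.max (continuous_id.min continuous_const)
  have hπmem : ∀ s, π s ∈ Set.Icc (0:ℝ) T :=
    fun s => ⟨le_max_left _ _, max_le hT (min_le_right _ _)⟩
  have hπeq : ∀ s ∈ Set.Icc (0:ℝ) T, π s = s := by
    intro s hs
    rw [hπdef]
    simp only [min_eq_left hs.2, max_eq_right hs.1]
  -- the drift path and the integrated process
  set ψ : (Fin d → ℝ) → Ω → ℝ → (Fin d → ℝ) := fun x ω s => μ (X x (π s) ω) with hψdef
  have hψcont : ∀ x ω, Continuous (ψ x ω) := fun x ω =>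
    hμ.continuous.comp ((hXcont x ω).comp_continuous hπcont hπmem)
  set Y : (Fin d → ℝ) → Ω → ℝ → (Fin d → ℝ) :=
    fun x ω t => x + ∫ s in (0:ℝ)..t, ψ x ω s with hYdef
  have hYderiv : ∀ x ω t, HasDerivAt (Y x ω) (ψ x ω t) t := by
    intro x ω t
    exact (((hψcont x ω).integral_hasStrictDerivAt 0 t).hasDerivAt).const_add x
  have hY0 : ∀ x ω, Y x ω 0 = x := by
    intro x ω; simp [hYdef]
  have hXY : ∀ (x : Fin d → ℝ) (ω : Ω), ∀ t ∈ Set.Icc (0:ℝ) T,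
      X x t ω = Y x ω t + σ.mulVec (W t ω) := by
    intro x ω t ht
    have hic : ∫ s in (0:ℝ)..t, ψ x ω s = ∫ s in (0:ℝ)..t, μ (X x s ω) := by
      apply intervalIntegral.integral_congr
      intro s hs
      rw [Set.uIcc_of_le ht.1] at hs
      have hsm : s ∈ Set.Icc (0:ℝ) T := ⟨hs.1, hs.2.trans ht.2⟩
      simp only [hψdef, hπeq s hsm]
    rw [heq x t ht ω, show Y x ω t = x + ∫ s in (0:ℝ)..t, ψ x ω s from rfl, hic]
  -- maximum of φ ∘ W over [0,T]
  have hKex : ∀ ω : Ω, ∃ t, t ∈ Set.Icc (0:ℝ) T ∧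
      ∀ s ∈ Set.Icc (0:ℝ) T, φ (W s ω) ≤ φ (W t ω) := by
    intro ω
    obtain ⟨t, htm, hmax⟩ := isCompact_Icc.exists_isMaxOn ⟨0, h0T⟩
      (hφc.comp_continuousOn (hWcont ω))
    exact ⟨t, htm, fun s hs => hmax hs⟩
  choose tK htKmem htKmax using hKex
  set K : Ω → ℝ := fun ω => φ (W (tK ω) ω) with hKdef
  have hK0 : ∀ ω, 0 ≤ K ω := fun ω => hφ0 _
  -- maximum of Nd ∘ σW over [0,T]
  have hNWex : ∀ ω : Ω, ∃ t, t ∈ Set.Icc (0:ℝ) T ∧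
      ∀ s ∈ Set.Icc (0:ℝ) T, Nd (σ.mulVec (W s ω)) ≤ Nd (σ.mulVec (W t ω)) := by
    intro ω
    obtain ⟨t, htm, hmax⟩ := isCompact_Icc.exists_isMaxOn ⟨0, h0T⟩
      ((hNdcont.comp hσcont).comp_continuousOn (hWcont ω))
    exact ⟨t, htm, fun s hs => hmax hs⟩
  choose tN htNmem htNmax using hNWex
  set NW : Ω → ℝ := fun ω => Nd (σ.mulVec (W (tN ω) ω)) with hNWdef
  have hNW0 : ∀ ω, 0 ≤ NW ω := fun ω => hNd.nonneg' _
  -- the Lyapunov-Gronwall bound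
  have hVY : ∀ (x : Fin d → ℝ) (ω : Ω), ∀ t ∈ Set.Icc (0:ℝ) T,
      V (Y x ω t) ≤ V x * Real.exp (K ω * t) := by
    intro x ω t ht
    have hVd : Differentiable ℝ V := hV.differentiable one_ne_zero
    set g : ℝ → ℝ := fun s => V (Y x ω s) * Real.exp (-(K ω) * s) with hgdef
    have hVYd : ∀ s : ℝ, HasDerivAt (fun u => V (Y x ω u))
        (fderiv ℝ V (Y x ω s) (ψ x ω s)) s := fun s =>
      (hVd (Y x ω s)).hasFDerivAt.comp_hasDerivAt s (hYderiv x ω s)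
    have hexpd : ∀ s : ℝ, HasDerivAt (fun u => Real.exp (-(K ω) * u))
        (-(K ω) * Real.exp (-(K ω) * s)) s := by
      intro s
      have h1 := (((hasDerivAt_id s).const_mul (-(K ω)))).exp
      simpa [mul_comm] using h1
    have hgd : ∀ s : ℝ, HasDerivAt g
        ((fderiv ℝ V (Y x ω s) (ψ x ω s)) * Real.exp (-(K ω) * s)
          + V (Y x ω s) * (-(K ω) * Real.exp (-(K ω) * s))) s :=
      fun s => (hVYd s).mul (hexpd s)
    have hanti : AntitoneOn g (Set.Icc (0:ℝ) T) := by
      apply antitoneOn_of_deriv_nonpos (convex_Icc 0 T)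
      · exact Continuous.continuousOn
          (continuous_iff_continuousAt.2 fun s => ((hgd s).differentiableAt).continuousAt)
      · exact fun s _ => ((hgd s).differentiableAt).differentiableWithinAt
      · intro s hs
        rw [interior_Icc] at hs
        rw [(hgd s).deriv]
        have hsm : s ∈ Set.Icc (0:ℝ) T := ⟨hs.1.le, hs.2.le⟩
        have hψs : ψ x ω s = μ (Y x ω s + σ.mulVec (W s ω)) := by
          simp only [hψdef, hπeq s hsm, hXY x ω s hsm]
        have hfd : fderiv ℝ V (Y x ω s) (ψ x ω s) ≤ K ω * V (Y x ω s) := by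
          rw [hψs]
          exact (hLyap (Y x ω s) (W s ω)).trans
            (mul_le_mul_of_nonneg_right (htKmax ω s hsm) (hV0 _))
        have hexp : 0 < Real.exp (-(K ω) * s) := Real.exp_pos _
        nlinarith
    have h01 : g t ≤ g 0 := hanti h0T ht ht.1
    have hg0 : g 0 = V x := by simp [hgdef, hY0]
    rw [hg0] at h01
    have h2 := mul_le_mul_of_nonneg_right h01 (Real.exp_pos (K ω * t)).le
    calc V (Y x ω t)
        = V (Y x ω t) * Real.exp (-(K ω) * t) * Real.exp (K ω * t) := by
          rw [mul_assoc, ← Real.exp_add]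
          simp
      _ ≤ V x * Real.exp (K ω * t) := h2
  -- trajectories stay in a compact set; Lipschitz dependence on initial condition
  have hLipX : ∀ (ω : Ω) (R' : ℝ), 0 ≤ R' → ∃ C : ℝ, 0 ≤ C ∧
      ∀ x x', Nd x ≤ R' → Nd x' ≤ R' → ∀ t ∈ Set.Icc (0:ℝ) T,
      ‖X x t ω - X x' t ω‖ ≤ Real.exp (C * T) * ‖x - x'‖ := by
    intro ω R' hR'
    -- the ball is compact
    have hballcl : IsClosed {z : Fin d → ℝ | Nd z ≤ R'} :=
      isClosed_le hNdcont continuous_const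
    have hballbd : Bornology.IsBounded {z : Fin d → ℝ | Nd z ≤ R'} := by
      rw [isBounded_iff_forall_norm_le]
      refine ⟨R' / c₁, fun z hz => ?_⟩
      rw [le_div_iff₀ hc₁pos]
      calc ‖z‖ * c₁ = c₁ * ‖z‖ := mul_comm _ _
        _ ≤ Nd z := hc₁ z
        _ ≤ R' := hz
    have hballcpt : IsCompact {z : Fin d → ℝ | Nd z ≤ R'} :=
      Metric.isCompact_of_isClosed_isBounded hballcl hballbd
    have hballne : ({z : Fin d → ℝ | Nd z ≤ R'}).Nonempty :=
      ⟨0, by simp only [Set.mem_setOf_eq, hNd.zero']; exact hR'⟩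
    obtain ⟨z₀, hz₀m, hz₀max⟩ := hballcpt.exists_isMaxOn hballne (hV.continuous.continuousOn)
    set CV : ℝ := V z₀ with hCVdef
    have hCV : ∀ z, Nd z ≤ R' → V z ≤ CV := fun z hz => hz₀max hz
    have hCV0 : 0 ≤ CV := le_trans (hV0 z₀) (le_refl _)
    set M : ℝ := CV * Real.exp (K ω * T) with hMdef
    have hM0 : 0 ≤ M := mul_nonneg hCV0 (Real.exp_pos _).le
    set ρ : ℝ := (M + NW ω) / c₁ + 1 with hρdef
    -- trajectories stay in the closed ball of radius ρ
    have htraj : ∀ x, Nd x ≤ R' → ∀ t ∈ Set.Icc (0:ℝ) T,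
        X x t ω ∈ Metric.closedBall (0 : Fin d → ℝ) ρ := by
      intro x hx t ht
      rw [Metric.mem_closedBall, dist_zero_right]
      have h1 : Nd (X x t ω) ≤ M + NW ω := by
        rw [hXY x ω t ht]
        calc Nd (Y x ω t + σ.mulVec (W t ω))
            ≤ Nd (Y x ω t) + Nd (σ.mulVec (W t ω)) := hNd.2.2 _ _
          _ ≤ V (Y x ω t) + NW ω := add_le_add (hNV _) (htNmax ω t ht)
          _ ≤ V x * Real.exp (K ω * t) + NW ω := by
              exact add_le_add_left (hVY x ω t ht) _
          _ ≤ M + NW ω := by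
              apply add_le_add_left
              rw [hMdef]
              apply mul_le_mul (hCV x hx)
                (Real.exp_le_exp.2 (mul_le_mul_of_nonneg_left ht.2 (hK0 ω)))
                (Real.exp_pos _).le hCV0
      have h2 : c₁ * ‖X x t ω‖ ≤ M + NW ω := le_trans (hc₁ _) h1
      rw [hρdef]
      have := (le_div_iff₀' hc₁pos).2 h2
      linarith
    -- Lipschitz constant of μ on that ball
    have hcball : IsCompact (Metric.closedBall (0 : Fin d → ℝ) ρ) :=
      isCompact_closedBall _ _
    have hcballne : (Metric.closedBall (0 : Fin d → ℝ) ρ).Nonempty := by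
      refine ⟨0, ?_⟩
      rw [Metric.mem_closedBall, dist_self]
      have : 0 ≤ (M + NW ω) / c₁ := div_nonneg (by linarith [hNW0 ω]) hc₁pos.le
      rw [hρdef]; linarith
    obtain ⟨w₀, hw₀m, hw₀max⟩ := hcball.exists_isMaxOn hcballne
      ((hμ.continuous_fderiv one_ne_zero).norm.continuousOn)
    set L : ℝ := ‖fderiv ℝ μ w₀‖ with hLdef
    have hL0 : 0 ≤ L := norm_nonneg _
    have hLbd : ∀ z ∈ Metric.closedBall (0 : Fin d → ℝ) ρ, ‖fderiv ℝ μ z‖ ≤ L :=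
      fun z hz => hw₀max hz
    have hLipμ : ∀ a ∈ Metric.closedBall (0 : Fin d → ℝ) ρ,
        ∀ b ∈ Metric.closedBall (0 : Fin d → ℝ) ρ, ‖μ a - μ b‖ ≤ L * ‖a - b‖ := by
      intro a ha b hb
      exact (convex_closedBall _ _).norm_image_sub_le_of_norm_fderiv_le
        (fun z _ => (hμ.differentiable one_ne_zero) z) hLbd hb ha
    refine ⟨L, hL0, ?_⟩
    intro x x' hx hx' t ht
    set f : ℝ → (Fin d → ℝ) := fun s => Y x ω s - Y x' ω s with hfdef
    have hfd : ∀ s, HasDerivAt f (ψ x ω s - ψ x' ω s) s :=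
      fun s => (hYderiv x ω s).sub (hYderiv x' ω s)
    have hXdiff : ∀ s ∈ Set.Icc (0:ℝ) T, X x s ω - X x' s ω = f s := by
      intro s hs
      rw [hXY x ω s hs, hXY x' ω s hs, hfdef]
      abel
    have key := norm_le_gronwallBound_of_norm_deriv_right_le
      (f := f) (f' := fun s => ψ x ω s - ψ x' ω s) (δ := ‖x - x'‖) (K := L) (ε := 0)
      (a := 0) (b := T)
      (continuous_iff_continuousAt.2 fun s => ((hfd s).differentiableAt).continuousAt).continuousOn
      (fun s _ => (hfd s).hasDerivWithinAt)
      (by rw [hfdef]; simp [hY0])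
      ?_ t ht
    · rw [gronwallBound_ε0, sub_zero] at key
      rw [hXdiff t ht]
      calc ‖f t‖ ≤ ‖x - x'‖ * Real.exp (L * t) := key
        _ ≤ ‖x - x'‖ * Real.exp (L * T) := by
            apply mul_le_mul_of_nonneg_left _ (norm_nonneg _)
            exact Real.exp_le_exp.2 (mul_le_mul_of_nonneg_left ht.2 hL0)
        _ = Real.exp (L * T) * ‖x - x'‖ := mul_comm _ _
    · intro s hs
      have hsm : s ∈ Set.Icc (0:ℝ) T := ⟨hs.1, hs.2.le⟩
      have hψeq : ∀ y : Fin d → ℝ, ψ y ω s = μ (X y s ω) := by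
        intro y; simp only [hψdef, hπeq s hsm]
      show ‖ψ x ω s - ψ x' ω s‖ ≤ L * ‖f s‖ + 0
      rw [hψeq x, hψeq x']
      calc ‖μ (X x s ω) - μ (X x' s ω)‖
          ≤ L * ‖X x s ω - X x' s ω‖ :=
            hLipμ _ (htraj x hx s hsm) _ (htraj x' hx' s hsm)
        _ = L * ‖f s‖ + 0 := by rw [hXdiff s hsm, add_zero]
  -- part (i): reduction to countable suprema
  have hmain_i : ∀ R r : ℝ, 0 ≤ R → 0 ≤ r → ∀ ω : Ω,
      (⨆ x ∈ {z : Fin d → ℝ | Nd z ≤ R},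
        ⨆ t ∈ Set.Icc (0 : ℝ) T, ENNReal.ofReal (Nd (X x t ω) ^ r))
      = ⨆ x ∈ ratBall d Nd R, ⨆ t ∈ ratIcc T, ENNReal.ofReal (Nd (X x t ω) ^ r) := by
    intro R r hR hr ω
    apply le_antisymm
    · refine iSup₂_le fun x hx => iSup₂_le fun t ht => ?_
      obtain ⟨C, hC0, hLip⟩ := hLipX ω R hR
      have step2 : ∀ s ∈ ratIcc T,
          ENNReal.ofReal (Nd (X x s ω) ^ r) ≤
          ⨆ y ∈ ratBall d Nd R, ⨆ u ∈ ratIcc T, ENNReal.ofReal (Nd (X y u ω) ^ r) := by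
        intro s hs
        obtain ⟨v, hvmem, hvlim⟩ := exists_ratBall_seq hNd hc₂pos hc₂ hR hx
        have hXlim : Tendsto (fun k => X (v k) s ω) atTop (𝓝 (X x s ω)) := by
          rw [tendsto_iff_dist_tendsto_zero]
          apply squeeze_zero (fun k => dist_nonneg)
            (g := fun k => Real.exp (C * T) * dist (v k) x)
          · intro k
            rw [dist_eq_norm, dist_eq_norm]
            exact hLip (v k) x (hvmem k).2 hx s (ratIcc_subset T hs)
          · have h1 := (tendsto_iff_dist_tendsto_zero.1 hvlim)
            have h2 := h1.const_mul (Real.exp (C * T))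
            simpa using h2
        have hlim2 : Tendsto (fun k => Nd (X (v k) s ω) ^ r) atTop
            (𝓝 (Nd (X x s ω) ^ r)) :=
          (((Real.continuous_rpow_const hr).comp hNdcont).tendsto _).comp hXlim
        have hofReal : Tendsto (fun k => ENNReal.ofReal (Nd (X (v k) s ω) ^ r)) atTop
            (𝓝 (ENNReal.ofReal (Nd (X x s ω) ^ r))) :=
          (ENNReal.continuous_ofReal.tendsto _).comp hlim2
        refine le_of_tendsto hofReal (Eventually.of_forall fun k => ?_)
        calc ENNReal.ofReal (Nd (X (v k) s ω) ^ r)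
            ≤ ⨆ u ∈ ratIcc T, ENNReal.ofReal (Nd (X (v k) u ω) ^ r) :=
              le_iSup₂ (f := fun u (_ : u ∈ ratIcc T) =>
                ENNReal.ofReal (Nd (X (v k) u ω) ^ r)) s hs
          _ ≤ _ := le_iSup₂ (f := fun y (_ : y ∈ ratBall d Nd R) =>
              ⨆ u ∈ ratIcc T, ENNReal.ofReal (Nd (X y u ω) ^ r)) (v k) (hvmem k)
      obtain ⟨u, humem, hulim⟩ := exists_ratIcc_seq hT ht
      have hwlim : Tendsto u atTop (𝓝[Set.Icc (0:ℝ) T] t) :=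
        tendsto_nhdsWithin_of_tendsto_nhds_of_eventually_within u hulim
          (Eventually.of_forall fun n => ratIcc_subset T (humem n))
      have hXt : Tendsto (fun n => X x (u n) ω) atTop (𝓝 (X x t ω)) :=
        Tendsto.comp (hXcont x ω t ht) hwlim
      have hlim3 : Tendsto (fun n => ENNReal.ofReal (Nd (X x (u n) ω) ^ r)) atTop
          (𝓝 (ENNReal.ofReal (Nd (X x t ω) ^ r))) :=
        (ENNReal.continuous_ofReal.tendsto _).comp
          ((((Real.continuous_rpow_const hr).comp hNdcont).tendsto _).comp hXt)
      exact le_of_tendsto hlim3 (Eventually.of_forall fun n => step2 (u n) (humem n))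
    · refine iSup₂_le fun x hx => iSup₂_le fun t ht => ?_
      calc ENNReal.ofReal (Nd (X x t ω) ^ r)
          ≤ ⨆ u ∈ Set.Icc (0:ℝ) T, ENNReal.ofReal (Nd (X x u ω) ^ r) :=
            le_iSup₂ (f := fun u (_ : u ∈ Set.Icc (0:ℝ) T) =>
              ENNReal.ofReal (Nd (X x u ω) ^ r)) t (ratIcc_subset T ht)
        _ ≤ _ := le_iSup₂ (f := fun y (_ : y ∈ {z : Fin d → ℝ | Nd z ≤ R}) =>
            ⨆ u ∈ Set.Icc (0:ℝ) T, ENNReal.ofReal (Nd (X y u ω) ^ r)) x hx.2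
  constructor
  · intro R r hR hr
    have hfun : (fun ω => ⨆ x ∈ {z : Fin d → ℝ | Nd z ≤ R},
        ⨆ t ∈ Set.Icc (0 : ℝ) T, ENNReal.ofReal (Nd (X x t ω) ^ r))
        = fun ω => ⨆ x ∈ ratBall d Nd R, ⨆ t ∈ ratIcc T,
          ENNReal.ofReal (Nd (X x t ω) ^ r) := funext (hmain_i R r hR hr)
    rw [hfun]
    apply Measurable.biSup _ (ratBall_countable d Nd R)
    intro x hx
    apply Measurable.biSup _ (ratIcc_countable T)
    intro t ht
    exact ENNReal.measurable_ofReal.comp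
      (((Real.continuous_rpow_const hr).comp hNdcont).measurable.comp
        (hXmeas x t (ratIcc_subset T ht)))
  · intro R r hR hr
    -- constant: max of V over the ball
    have hballbd : Bornology.IsBounded {z : Fin d → ℝ | Nd z ≤ R} := by
      rw [isBounded_iff_forall_norm_le]
      refine ⟨R / c₁, fun z hz => ?_⟩
      rw [le_div_iff₀ hc₁pos]
      calc ‖z‖ * c₁ = c₁ * ‖z‖ := mul_comm _ _
        _ ≤ Nd z := hc₁ z
        _ ≤ R := hz
    have hballcpt : IsCompact {z : Fin d → ℝ | Nd z ≤ R} :=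
      Metric.isCompact_of_isClosed_isBounded (isClosed_le hNdcont continuous_const) hballbd
    have hballne : ({z : Fin d → ℝ | Nd z ≤ R}).Nonempty :=
      ⟨0, by simp only [Set.mem_setOf_eq, hNd.zero']; exact hR⟩
    obtain ⟨z₀, hz₀m, hz₀max⟩ := hballcpt.exists_isMaxOn hballne (hV.continuous.continuousOn)
    set CV : ℝ := V z₀ with hCVdef
    have hCV : ∀ z, Nd z ≤ R → V z ≤ CV := fun z hz => hz₀max hz
    have hCV0 : 0 ≤ CV := hV0 z₀
    set a : ℝ≥0∞ := ENNReal.ofReal (2 ^ r * CV ^ r) with hadef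
    set b : ℝ≥0∞ := ENNReal.ofReal (2 ^ r) with hbdef
    set G : Ω → ℝ≥0∞ :=
      fun ω => ⨆ t ∈ ratIcc T, ENNReal.ofReal (Real.exp (r * T * φ (W t ω))) with hGdef
    set H : Ω → ℝ≥0∞ :=
      fun ω => ⨆ t ∈ ratIcc T, ENNReal.ofReal (Nd (σ.mulVec (W t ω)) ^ r) with hHdef
    have hG : Measurable G := by
      apply Measurable.biSup _ (ratIcc_countable T)
      intro t ht
      exact ENNReal.measurable_ofReal.comp
        ((Real.continuous_exp.comp (continuous_const.mul hφc)).measurable.comp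
          (hWmeas t (ratIcc_subset T ht)))
    have hH : Measurable H := by
      apply Measurable.biSup _ (ratIcc_countable T)
      intro t ht
      exact ENNReal.measurable_ofReal.comp
        (((Real.continuous_rpow_const hr).comp (hNdcont.comp hσcont)).measurable.comp
          (hWmeas t (ratIcc_subset T ht)))
    have hpath : ∀ ω : Ω, (⨆ x ∈ {z : Fin d → ℝ | Nd z ≤ R},
        ⨆ t ∈ Set.Icc (0 : ℝ) T, ENNReal.ofReal (Nd (X x t ω) ^ r))
        ≤ a * G ω + b * H ω := by
      intro ω
      refine iSup₂_le fun x hx => iSup₂_le fun t ht => ?_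
      have hA0 : 0 ≤ CV * Real.exp (K ω * T) := mul_nonneg hCV0 (Real.exp_pos _).le
      have hB0 : 0 ≤ NW ω := hNW0 ω
      have h1 : Nd (X x t ω) ≤ CV * Real.exp (K ω * T) + NW ω := by
        rw [hXY x ω t ht]
        calc Nd (Y x ω t + σ.mulVec (W t ω))
            ≤ Nd (Y x ω t) + Nd (σ.mulVec (W t ω)) := hNd.2.2 _ _
          _ ≤ V (Y x ω t) + NW ω := add_le_add (hNV _) (htNmax ω t ht)
          _ ≤ V x * Real.exp (K ω * t) + NW ω := add_le_add_left (hVY x ω t ht) _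
          _ ≤ CV * Real.exp (K ω * T) + NW ω := by
              apply add_le_add_left
              apply mul_le_mul (hCV x hx)
                (Real.exp_le_exp.2 (mul_le_mul_of_nonneg_left ht.2 (hK0 ω)))
                (Real.exp_pos _).le hCV0
      have h2 : Nd (X x t ω) ^ r
          ≤ 2 ^ r * CV ^ r * Real.exp (r * T * K ω) + 2 ^ r * NW ω ^ r := by
        set A : ℝ := CV * Real.exp (K ω * T) with hAdef
        set B : ℝ := NW ω with hBdef2
        have hXnn : 0 ≤ Nd (X x t ω) := hNd.nonneg' _
        have s1 : Nd (X x t ω) ^ r ≤ (A + B) ^ r := Real.rpow_le_rpow hXnn h1 hr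
        have s2 : (A + B) ^ r ≤ (2 * max A B) ^ r := by
          apply Real.rpow_le_rpow (by linarith) _ hr
          rcases le_total A B with h | h
          · rw [max_eq_right h]; linarith
          · rw [max_eq_left h]; linarith
        have s3 : (2 * max A B) ^ r = 2 ^ r * (max A B) ^ r :=
          Real.mul_rpow (by norm_num) (le_max_iff.2 (Or.inl hA0))
        have s4 : (max A B) ^ r ≤ A ^ r + B ^ r := by
          rcases le_total A B with h | h
          · rw [max_eq_right h]
            have := Real.rpow_nonneg hA0 r; linarith
          · rw [max_eq_left h]
            have := Real.rpow_nonneg hB0 r; linarith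
        have s5 : A ^ r = CV ^ r * Real.exp (r * T * K ω) := by
          rw [hAdef, Real.mul_rpow hCV0 (Real.exp_pos _).le, ← Real.exp_mul]
          congr 2
          ring
        have h2pow : (0:ℝ) ≤ 2 ^ r := Real.rpow_nonneg (by norm_num) r
        calc Nd (X x t ω) ^ r ≤ (2 * max A B) ^ r := s1.trans s2
          _ = 2 ^ r * (max A B) ^ r := s3
          _ ≤ 2 ^ r * (A ^ r + B ^ r) := mul_le_mul_of_nonneg_left s4 h2pow
          _ = 2 ^ r * CV ^ r * Real.exp (r * T * K ω) + 2 ^ r * NW ω ^ r := by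
              rw [s5]; ring
      have e1 : ENNReal.ofReal (Real.exp (r * T * K ω)) ≤ G ω := by
        obtain ⟨u, humem, hulim⟩ := exists_ratIcc_seq hT (htKmem ω)
        have hwin : Tendsto u atTop (𝓝[Set.Icc (0:ℝ) T] (tK ω)) :=
          tendsto_nhdsWithin_of_tendsto_nhds_of_eventually_within u hulim
            (Eventually.of_forall fun n => ratIcc_subset T (humem n))
        have hWlim : Tendsto (fun n => W (u n) ω) atTop (𝓝 (W (tK ω) ω)) :=
          Tendsto.comp (hWcont ω (tK ω) (htKmem ω)) hwin
        refine le_biSup_of_seq (ratIcc T) (fun s => Real.exp (r * T * φ (W s ω))) humem ?_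
        exact ((Real.continuous_exp.comp (continuous_const.mul hφc)).tendsto _).comp hWlim
      have e2 : ENNReal.ofReal (NW ω ^ r) ≤ H ω := by
        obtain ⟨u, humem, hulim⟩ := exists_ratIcc_seq hT (htNmem ω)
        have hwin : Tendsto u atTop (𝓝[Set.Icc (0:ℝ) T] (tN ω)) :=
          tendsto_nhdsWithin_of_tendsto_nhds_of_eventually_within u hulim
            (Eventually.of_forall fun n => ratIcc_subset T (humem n))
        have hWlim : Tendsto (fun n => W (u n) ω) atTop (𝓝 (W (tN ω) ω)) :=
          Tendsto.comp (hWcont ω (tN ω) (htNmem ω)) hwin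
        refine le_biSup_of_seq (ratIcc T) (fun s => Nd (σ.mulVec (W s ω)) ^ r) humem ?_
        exact (((Real.continuous_rpow_const hr).comp (hNdcont.comp hσcont)).tendsto _).comp hWlim
      have h2pow : (0:ℝ) ≤ 2 ^ r := Real.rpow_nonneg (by norm_num) r
      calc ENNReal.ofReal (Nd (X x t ω) ^ r)
          ≤ ENNReal.ofReal (2 ^ r * CV ^ r * Real.exp (r * T * K ω) + 2 ^ r * NW ω ^ r) :=
            ENNReal.ofReal_le_ofReal h2
        _ ≤ ENNReal.ofReal (2 ^ r * CV ^ r * Real.exp (r * T * K ω))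
            + ENNReal.ofReal (2 ^ r * NW ω ^ r) := ENNReal.ofReal_add_le
        _ = a * ENNReal.ofReal (Real.exp (r * T * K ω)) + b * ENNReal.ofReal (NW ω ^ r) := by
            rw [hadef, hbdef, ← ENNReal.ofReal_mul (mul_nonneg h2pow (Real.rpow_nonneg hCV0 r)),
              ← ENNReal.ofReal_mul h2pow]
        _ ≤ a * G ω + b * H ω := add_le_add (mul_le_mul_right e1 _) (mul_le_mul_right e2 _)
    calc (∫⁻ ω, (⨆ x ∈ {z : Fin d → ℝ | Nd z ≤ R},
          ⨆ t ∈ Set.Icc (0 : ℝ) T, ENNReal.ofReal (Nd (X x t ω) ^ r)) ∂P)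
        ≤ ∫⁻ ω, (a * G ω + b * H ω) ∂P := lintegral_mono hpath
      _ = a * (∫⁻ ω, G ω ∂P) + b * (∫⁻ ω, H ω ∂P) := by
          rw [lintegral_add_left (hG.const_mul a), lintegral_const_mul' a _ ENNReal.ofReal_ne_top,
            lintegral_const_mul' b _ ENNReal.ofReal_ne_top]
      _ < ⊤ := by
          have h1 := hint (r * T) (mul_nonneg hr hT)
          have h2 := hint r hr
          have hGfin : (∫⁻ ω, G ω ∂P) < ⊤ := lt_of_le_of_lt le_self_add h1
          have hHfin : (∫⁻ ω, H ω ∂P) < ⊤ := lt_of_le_of_lt le_add_self h2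
          exact ENNReal.add_lt_top.2
            ⟨ENNReal.mul_lt_top ENNReal.ofReal_lt_top hGfin,
             ENNReal.mul_lt_top ENNReal.ofReal_lt_top hHfin⟩
end
end

section
/- Let T,c ∈ [0,∞), α ∈ [0,2), let (Ω,ℱ,ℙ) be a probability space, and let W: [0,T]×Ω → ℝ be a one-dimensional standard Brownian motion with continuous sample paths. Then (i) the map Ω ∋ ω ↦ sup_{t∈[0,T]} |W(t,ω)|^α ∈ ℝ is ℱ/ℬ(ℝ)-measurable, and (ii) E[exp(c·sup_{t∈[0,T]} |W(t)|^α)] < ∞. -/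
open MeasureTheory ProbabilityTheory Filter
open scoped ENNReal NNReal

noncomputable section

/-- `W` is a one-dimensional standard Brownian motion on `[0,T]`:
`W 0 = 0` almost surely, `W` has independent increments, every increment
`W t - W s` is centered Gaussian with variance `t - s`, and all sample paths
are continuous. -/
def IsStandardBM1 {Ω : Type*} [MeasurableSpace Ω] (P : Measure Ω) (T : ℝ)
    (W : ℝ → Ω → ℝ) : Prop :=
  (∀ t ∈ Set.Icc (0 : ℝ) T, Measurable (W t)) ∧
  (∀ᵐ ω ∂P, W 0 ω = 0) ∧
  (∀ (n : ℕ) (t : Fin (n + 1) → ℝ), Monotone t → (∀ i, t i ∈ Set.Icc (0 : ℝ) T) →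
    iIndepFun
      (fun (i : Fin n) ω => W (t i.succ) ω - W (t i.castSucc) ω) P) ∧
  (∀ s t : ℝ, 0 ≤ s → s < t → t ≤ T →
    P.map (fun ω => W t ω - W s ω) = gaussianReal 0 ((t - s).toNNReal)) ∧
  (∀ ω, ContinuousOn (fun t => W t ω) (Set.Icc (0 : ℝ) T))

open Real

section Aux

/-- Gaussian tail bound: for variance `0 < v ≤ T`,
`P(|X| ≥ r) ≤ √2 · exp(-r²/(4T))`. -/
lemma gauss_tail {T : ℝ} (hT : 0 < T) {v : ℝ≥0} (hv : 0 < v) (hvT : (v : ℝ) ≤ T)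
    {r : ℝ} (hr : 0 ≤ r) :
    gaussianReal 0 v {x | r ≤ |x|} ≤ ENNReal.ofReal (Real.sqrt 2 * Real.exp (-r^2 / (4*T))) := by
  have hv' : v ≠ 0 := hv.ne'
  have h2v : (2 * v : ℝ≥0) ≠ 0 := by positivity
  have hA : MeasurableSet {x : ℝ | r ≤ |x|} :=
    measurableSet_le measurable_const measurable_abs
  have hvpos : (0:ℝ) < (v:ℝ) := hv
  have key : ∀ x ∈ {x : ℝ | r ≤ |x|}, gaussianPDF 0 v x ≤
      ENNReal.ofReal (Real.sqrt 2 * Real.exp (-r^2 / (4*T))) * gaussianPDF 0 (2*v) x := by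
    intro x hx
    rw [gaussianPDF, gaussianPDF, ← ENNReal.ofReal_mul (by positivity)]
    apply ENNReal.ofReal_le_ofReal
    have h1 : gaussianPDFReal 0 (2*v) x
        = (Real.sqrt 2 * Real.sqrt (2 * π * v))⁻¹ * Real.exp (-(x)^2 / (4*v)) := by
      rw [gaussianPDFReal]
      have h2 : (2 * π * ((2*v : ℝ≥0) : ℝ)) = 2 * (2 * π * v) := by push_cast; ring
      rw [h2, Real.sqrt_mul (by norm_num)]
      have h3 : (x - 0)^2 = x^2 := by ring
      rw [h3]
      have h4 : (2 * ((2*v : ℝ≥0) : ℝ)) = 4 * v := by push_cast; ring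
      rw [h4]
    rw [gaussianPDFReal, h1]
    have hx2 : r^2 ≤ x^2 := by
      have h5 : r ≤ |x| := hx
      nlinarith [abs_nonneg x, sq_abs x]
    have hexp : Real.exp (-(x - 0)^2 / (2*v)) ≤
        Real.exp (-r^2 / (4*T)) * Real.exp (-(x)^2 / (4*v)) := by
      rw [← Real.exp_add]
      apply Real.exp_le_exp.2
      have h1' : r^2 / (4*T) ≤ r^2 / (4*v) :=
        div_le_div_of_nonneg_left (by positivity) (by positivity) (by linarith)
      have h2' : r^2 / (4*v) ≤ x^2 / (4*v) :=
        div_le_div_of_nonneg_right hx2 (by positivity)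
      have h3' : -(x-0)^2 / (2*(v:ℝ)) = -(x^2/(4*v)) - x^2/(4*v) := by
        field_simp; ring
      rw [h3', neg_div, neg_div]
      linarith
    calc (Real.sqrt (2 * π * v))⁻¹ * Real.exp (-(x - 0)^2 / (2*v))
        ≤ (Real.sqrt (2 * π * v))⁻¹ *
          (Real.exp (-r^2 / (4*T)) * Real.exp (-(x)^2 / (4*v))) :=
          mul_le_mul_of_nonneg_left hexp (by positivity)
      _ = Real.sqrt 2 * Real.exp (-r ^ 2 / (4 * T)) *
          ((Real.sqrt 2 * Real.sqrt (2 * π * v))⁻¹ * Real.exp (-x ^ 2 / (4 * v))) := by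
          rw [mul_inv]
          have h6 : Real.sqrt 2 * (Real.sqrt 2)⁻¹ = 1 := by
            rw [mul_inv_cancel₀]; positivity
          field_simp
  calc gaussianReal 0 v {x | r ≤ |x|}
      = ∫⁻ x in {x | r ≤ |x|}, gaussianPDF 0 v x := by
        rw [gaussianReal_of_var_ne_zero _ hv', withDensity_apply _ hA]
    _ ≤ ∫⁻ x in {x | r ≤ |x|}, ENNReal.ofReal (Real.sqrt 2 * Real.exp (-r^2 / (4*T)))
          * gaussianPDF 0 (2*v) x := setLIntegral_mono (measurable_const.mul (measurable_gaussianPDF _ _)) key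
    _ ≤ ∫⁻ x, ENNReal.ofReal (Real.sqrt 2 * Real.exp (-r^2 / (4*T)))
          * gaussianPDF 0 (2*v) x := setLIntegral_le_lintegral _ _
    _ = ENNReal.ofReal (Real.sqrt 2 * Real.exp (-r^2 / (4*T)))
          * ∫⁻ x, gaussianPDF 0 (2*v) x := lintegral_const_mul _ (measurable_gaussianPDF _ _)
    _ = ENNReal.ofReal (Real.sqrt 2 * Real.exp (-r^2 / (4*T))) * 1 := by
        rw [← setLIntegral_univ, ← withDensity_apply _ MeasurableSet.univ,
          ← gaussianReal_of_var_ne_zero 0 h2v]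
        simp
    _ = _ := mul_one _

/-- a countable dense subset of `[0,T]` containing `0` -/
def DD (T : ℝ) : Set ℝ := Set.Icc 0 T ∩ (Set.range ((↑) : ℚ → ℝ) ∪ {0, T})

lemma DD_countable (T : ℝ) : (DD T).Countable :=
  Set.Countable.mono Set.inter_subset_right
    ((Set.countable_range _).union ((Set.finite_singleton T).insert 0).countable)

lemma DD_zero_mem {T : ℝ} (hT : 0 ≤ T) : (0:ℝ) ∈ DD T :=
  ⟨⟨le_rfl, hT⟩, Or.inr (Or.inl rfl)⟩

lemma DD_subset (T : ℝ) : DD T ⊆ Set.Icc 0 T := Set.inter_subset_left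

lemma DD_dense {T : ℝ} (hT : 0 ≤ T) : Set.Icc 0 T ⊆ closure (DD T) := by
  intro x hx
  rcases eq_or_lt_of_le hx.2 with hxT | hxT
  · exact subset_closure ⟨hx, Or.inr (Or.inr (by simp [hxT]))⟩
  · rw [Metric.mem_closure_iff]
    intro ε hε
    have hlt : x < min (x + ε) T := lt_min (by linarith) hxT
    obtain ⟨q, hq1, hq2⟩ := exists_rat_btwn hlt
    refine ⟨(q:ℝ), ⟨⟨le_trans hx.1 hq1.le, le_trans hq2.le (min_le_right _ _)⟩,
      Or.inl ⟨q, rfl⟩⟩, ?_⟩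
    rw [Real.dist_eq, abs_sub_lt_iff]
    have := lt_of_lt_of_le hq2 (min_le_left _ _)
    constructor <;> linarith

instance {T : ℝ} : Countable ↥(DD T) := (DD_countable T).to_subtype

lemma DD_nonempty {T : ℝ} (hT : 0 ≤ T) : Nonempty ↥(DD T) := ⟨⟨0, DD_zero_mem hT⟩⟩

/-- sup over `[0,T]` of a continuous function equals sup over the countable dense set -/
lemma dense_sup {T : ℝ} (hT : 0 ≤ T) {g : ℝ → ℝ} (hg : ContinuousOn g (Set.Icc 0 T)) :
    sSup (g '' Set.Icc 0 T) = ⨆ q : ↥(DD T), g q := by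
  have : Nonempty ↥(DD T) := DD_nonempty hT
  have hne : (Set.Icc (0:ℝ) T).Nonempty := ⟨0, le_rfl, hT⟩
  have hbdd : BddAbove (g '' Set.Icc 0 T) :=
    (isCompact_Icc.image_of_continuousOn hg).bddAbove
  have hrange : Set.range (fun q : ↥(DD T) => g q) ⊆ g '' Set.Icc 0 T := by
    rintro y ⟨⟨q, hq⟩, rfl⟩
    exact Set.mem_image_of_mem _ (DD_subset T hq)
  have hbdd' : BddAbove (Set.range (fun q : ↥(DD T) => g q)) := hbdd.mono hrange
  apply le_antisymm
  · obtain ⟨x0, hx0mem, hx0max⟩ := isCompact_Icc.exists_isMaxOn hne hg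
    have h1 : sSup (g '' Set.Icc 0 T) ≤ g x0 :=
      csSup_le (hne.image _) (by rintro y ⟨x, hx, rfl⟩; exact hx0max hx)
    refine le_trans h1 ?_
    obtain ⟨u, hu_mem, hu_lim⟩ := mem_closure_iff_seq_limit.1 (DD_dense hT hx0mem)
    have hlim2 : Tendsto u atTop (nhdsWithin x0 (Set.Icc 0 T)) :=
      tendsto_nhdsWithin_of_tendsto_nhds_of_eventually_within _ hu_lim
        (Filter.Eventually.of_forall fun n => DD_subset T (hu_mem n))
    have hglim : Tendsto (fun n => g (u n)) atTop (nhds (g x0)) :=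
      ((hg x0 hx0mem).tendsto).comp hlim2
    exact le_of_tendsto hglim (Filter.Eventually.of_forall fun n =>
      le_ciSup hbdd' ⟨u n, hu_mem n⟩)
  · exact ciSup_le fun q => le_csSup hbdd (Set.mem_image_of_mem _ (DD_subset T q.2))

variable {Ω : Type*} [MeasurableSpace Ω] {P : Measure Ω} [IsProbabilityMeasure P]

/-- partial sums of `X` -/
def pS {n : ℕ} (X : Fin n → Ω → ℝ) (k : Fin (n+1)) (ω : Ω) : ℝ :=
  ∑ i ∈ Finset.univ.filter (fun i : Fin n => (i : ℕ) < (k : ℕ)), X i ω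

lemma pS_meas {n : ℕ} {X : Fin n → Ω → ℝ} (hm : ∀ i, Measurable (X i)) (k : Fin (n+1)) :
    Measurable (pS X k) := by
  apply Finset.measurable_sum
  exact fun i _ => hm i

/-- **Etemadi's maximal inequality.** -/
lemma etemadi {n : ℕ} {X : Fin n → Ω → ℝ} (hm : ∀ i, Measurable (X i))
    (hind : iIndepFun X P) {r : ℝ} (hr : 0 < r) {ε : ℝ≥0∞}
    (htail : ∀ k : Fin (n+1), P {ω | r ≤ |pS X k ω|} ≤ ε) :
    P {ω | ∃ k : Fin (n+1), 3*r ≤ |pS X k ω|} ≤ 3 * ε := by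
  classical
  -- first-entry events
  set A : Fin (n+1) → Set Ω := fun k =>
    {ω | 3*r ≤ |pS X k ω| ∧ ∀ j : Fin (n+1), j < k → |pS X j ω| < 3*r} with hA
  set L : Fin (n+1) := Fin.last n with hL
  set B : Fin (n+1) → Set Ω := fun k => {ω | 2*r ≤ |pS X L ω - pS X k ω|} with hB
  -- A k measurable
  have hAmeas : ∀ k, MeasurableSet (A k) := by
    intro k
    have heq : A k = {ω | 3*r ≤ |pS X k ω|} ∩
        ⋂ j : Fin (n+1), {ω | j < k → |pS X j ω| < 3*r} := by
      ext ω; simp [hA, Set.mem_iInter]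
    rw [heq]
    apply MeasurableSet.inter
    · exact measurableSet_le measurable_const (pS_meas hm k).abs
    · apply MeasurableSet.iInter
      intro j
      by_cases hj : j < k
      · simp only [hj, forall_true_left]
        exact measurableSet_lt (pS_meas hm j).abs measurable_const
      · exact MeasurableSet.univ.congr (by ext ω; simp [hj])
  -- A pairwise disjoint
  have hAdisj : Pairwise (Function.onFun Disjoint A) := by
    intro k k' hkk'
    rcases lt_or_gt_of_ne hkk' with h | h
    · rw [Function.onFun, Set.disjoint_left]
      rintro ω ⟨h1, _⟩ ⟨_, h2'⟩
      exact absurd h1 (not_le.2 (h2' k h))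
    · rw [Function.onFun, Set.disjoint_left]
      rintro ω ⟨_, h2⟩ ⟨h1', _⟩
      exact absurd h1' (not_le.2 (h2 k' h))
  -- the target event is the union of the A k
  have hE : {ω | ∃ k : Fin (n+1), 3*r ≤ |pS X k ω|} = ⋃ k, A k := by
    ext ω
    simp only [Set.mem_setOf_eq, Set.mem_iUnion]
    constructor
    · rintro ⟨k, hk⟩
      have hne : (Finset.univ.filter (fun j : Fin (n+1) => 3*r ≤ |pS X j ω|)).Nonempty :=
        ⟨k, by simpa using hk⟩
      set k₀ := Finset.min' _ hne with hk₀
      refine ⟨k₀, ?_, ?_⟩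
      · have := Finset.min'_mem _ hne
        simpa using this
      · intro j hj
        by_contra hcon
        push_neg at hcon
        have : k₀ ≤ j := Finset.min'_le _ _ (by simpa using hcon)
        exact absurd (lt_of_lt_of_le hj this) (lt_irrefl _)
    · rintro ⟨k, hk, _⟩
      exact ⟨k, hk⟩
  -- independence: P (A k ∩ B k) = P (A k) * P (B k)
  have hIndep : ∀ k : Fin (n+1), P (A k ∩ B k) = P (A k) * P (B k) := by
    intro k
    set Sk : Finset (Fin n) := Finset.univ.filter (fun i : Fin n => (i : ℕ) < (k : ℕ)) with hSk
    set Tk : Finset (Fin n) := Finset.univ.filter (fun i : Fin n => ¬ (i : ℕ) < (k : ℕ)) with hTk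
    have hdisj : Disjoint Sk Tk := Finset.disjoint_filter_filter_not _ _ _
    have hFG : IndepFun (fun ω (i : Sk) => X i ω) (fun ω (i : Tk) => X i ω) P :=
      hind.indepFun_finset Sk Tk hdisj hm
    -- coordinate sum functions
    set cf : Fin (n+1) → (↥Sk → ℝ) → ℝ :=
      fun j v => ∑ i : Sk, if ((i : Fin n) : ℕ) < (j : ℕ) then v i else 0 with hcf
    have hcfm : ∀ j, Measurable (cf j) := by
      intro j
      apply Finset.measurable_sum
      intro i _
      by_cases h : ((i : Fin n) : ℕ) < (j : ℕ)
      · simpa [h] using measurable_pi_apply i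
      · simpa [h] using measurable_const
    have hcfS : ∀ j : Fin (n+1), j ≤ k → ∀ ω, cf j (fun i : Sk => X i ω) = pS X j ω := by
      intro j hj ω
      rw [hcf]
      simp only
      rw [Finset.sum_coe_sort Sk (fun i => if ((i : Fin n):ℕ) < (j:ℕ) then X i ω else 0),
        ← Finset.sum_filter]
      rw [pS]
      congr 1
      rw [hSk, Finset.filter_filter]
      apply Finset.filter_congr
      intro i _
      constructor
      · rintro ⟨_, h2⟩; exact h2
      · intro h2; exact ⟨lt_of_lt_of_le h2 hj, h2⟩
    set df : (↥Tk → ℝ) → ℝ := fun v => ∑ i : Tk, v i with hdf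
    have hdfm : Measurable df := by
      apply Finset.measurable_sum
      intro i _
      exact measurable_pi_apply i
    have hdfS : ∀ ω, df (fun i : Tk => X i ω) = pS X L ω - pS X k ω := by
      intro ω
      rw [hdf]
      simp only
      rw [Finset.sum_coe_sort Tk (fun i => X i ω)]
      have h1 : pS X L ω = ∑ i ∈ Sk, X i ω + ∑ i ∈ Tk, X i ω := by
        rw [pS, hSk, hTk, Finset.sum_filter_add_sum_filter_not]
        apply Finset.sum_congr _ (fun _ _ => rfl)
        rw [Finset.filter_true_of_mem]
        intro i _
        exact lt_of_lt_of_le i.isLt (by simp [hL])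
      have h2 : pS X k ω = ∑ i ∈ Sk, X i ω := rfl
      rw [h1, h2]; ring
    -- sets
    set C : Set (↥Sk → ℝ) :=
      {v | 3*r ≤ |cf k v| ∧ ∀ j : Fin (n+1), j < k → |cf j v| < 3*r} with hC
    set D : Set (↥Tk → ℝ) := {v | 2*r ≤ |df v|} with hD
    have hCm : MeasurableSet C := by
      have heq : C = {v | 3*r ≤ |cf k v|} ∩
          ⋂ j : Fin (n+1), {v | j < k → |cf j v| < 3*r} := by
        ext v; simp [hC, Set.mem_iInter]
      rw [heq]
      apply MeasurableSet.inter
      · exact measurableSet_le measurable_const (hcfm k).abs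
      · apply MeasurableSet.iInter
        intro j
        by_cases hj : j < k
        · simp only [hj, forall_true_left]
          exact measurableSet_lt (hcfm j).abs measurable_const
        · exact MeasurableSet.univ.congr (by ext v; simp [hj])
    have hDm : MeasurableSet D := measurableSet_le measurable_const hdfm.abs
    have hAC : A k = (fun ω (i : Sk) => X i ω) ⁻¹' C := by
      ext ω
      simp only [hA, hC, Set.mem_setOf_eq, Set.mem_preimage]
      rw [hcfS k le_rfl ω]
      constructor
      · rintro ⟨h1, h2⟩
        exact ⟨h1, fun j hj => by rw [hcfS j hj.le ω]; exact h2 j hj⟩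
      · rintro ⟨h1, h2⟩
        exact ⟨h1, fun j hj => by rw [← hcfS j hj.le ω]; exact h2 j hj⟩
    have hBD : B k = (fun ω (i : Tk) => X i ω) ⁻¹' D := by
      ext ω
      simp only [hB, hD, Set.mem_setOf_eq, Set.mem_preimage]
      rw [hdfS ω]
    rw [hAC, hBD]
    exact hFG.measure_inter_preimage_eq_mul C D hCm hDm
  -- B k bound
  have hBbound : ∀ k, P (B k) ≤ 2 * ε := by
    intro k
    have hsub : B k ⊆ {ω | r ≤ |pS X L ω|} ∪ {ω | r ≤ |pS X k ω|} := by
      intro ω hω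
      simp only [hB, Set.mem_setOf_eq] at hω
      by_contra hcon
      simp only [Set.mem_union, Set.mem_setOf_eq, not_or, not_le] at hcon
      have h5 : |pS X L ω - pS X k ω| ≤ |pS X L ω| + |pS X k ω| :=
        (abs_sub _ _)
      linarith
    calc P (B k) ≤ P ({ω | r ≤ |pS X L ω|} ∪ {ω | r ≤ |pS X k ω|}) := measure_mono hsub
      _ ≤ P {ω | r ≤ |pS X L ω|} + P {ω | r ≤ |pS X k ω|} := measure_union_le _ _
      _ ≤ ε + ε := add_le_add (htail L) (htail k)
      _ = 2 * ε := (two_mul ε).symm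
  -- splitting A k
  have hsplit : ∀ k, P (A k) ≤ P (A k ∩ B k) + P (A k ∩ {ω | r ≤ |pS X L ω|}) := by
    intro k
    have hsub : A k ⊆ (A k ∩ B k) ∪ (A k ∩ {ω | r ≤ |pS X L ω|}) := by
      intro ω hω
      by_cases hB' : ω ∈ B k
      · exact Or.inl ⟨hω, hB'⟩
      · refine Or.inr ⟨hω, ?_⟩
        simp only [hB, Set.mem_setOf_eq, not_le] at hB'
        have h1 : 3*r ≤ |pS X k ω| := hω.1
        have h5 : |pS X k ω| - |pS X L ω| ≤ |pS X L ω - pS X k ω| := by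
          rw [abs_sub_comm]; exact abs_sub_abs_le_abs_sub _ _
        simp only [Set.mem_setOf_eq]; linarith
    exact le_trans (measure_mono hsub) (measure_union_le _ _)
  have hLmeas : MeasurableSet {ω | r ≤ |pS X L ω|} :=
    measurableSet_le measurable_const (pS_meas hm L).abs
  have hsum2 : ∑ k : Fin (n+1), P (A k ∩ {ω | r ≤ |pS X L ω|}) ≤ ε := by
    have hdisj2 : Pairwise (Function.onFun Disjoint
        (fun k => A k ∩ {ω | r ≤ |pS X L ω|})) :=
      fun k k' h => ((hAdisj h).mono Set.inter_subset_left Set.inter_subset_left)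
    calc ∑ k : Fin (n+1), P (A k ∩ {ω | r ≤ |pS X L ω|})
        = P (⋃ k, A k ∩ {ω | r ≤ |pS X L ω|}) := by
          rw [measure_iUnion hdisj2 (fun k => (hAmeas k).inter hLmeas), tsum_fintype]
      _ ≤ P {ω | r ≤ |pS X L ω|} :=
          measure_mono (Set.iUnion_subset fun k => Set.inter_subset_right)
      _ ≤ ε := htail L
  have hPsum : P (⋃ k, A k) = ∑ k : Fin (n+1), P (A k) := by
    rw [measure_iUnion hAdisj hAmeas, tsum_fintype]
  calc P {ω | ∃ k : Fin (n+1), 3*r ≤ |pS X k ω|}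
      = P (⋃ k, A k) := by rw [hE]
    _ = ∑ k : Fin (n+1), P (A k) := hPsum
    _ ≤ ∑ k : Fin (n+1), (P (A k ∩ B k) + P (A k ∩ {ω | r ≤ |pS X L ω|})) :=
        Finset.sum_le_sum (fun k _ => hsplit k)
    _ = ∑ k : Fin (n+1), P (A k ∩ B k)
          + ∑ k : Fin (n+1), P (A k ∩ {ω | r ≤ |pS X L ω|}) :=
        Finset.sum_add_distrib
    _ ≤ ∑ k : Fin (n+1), P (A k) * (2*ε) + ε := by
        apply add_le_add _ hsum2
        apply Finset.sum_le_sum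
        intro k _
        rw [hIndep k]
        exact mul_le_mul_right (hBbound k) _
    _ = (∑ k : Fin (n+1), P (A k)) * (2*ε) + ε := by rw [Finset.sum_mul]
    _ ≤ 1 * (2*ε) + ε := by
        apply add_le_add_left
        apply mul_le_mul_left
        rw [← hPsum]
        exact prob_le_one
    _ = 3*ε := by ring

/-- maximal tail bound on a finite grid of times -/
lemma bm_grid {T : ℝ} (hT : 0 < T) {W : ℝ → Ω → ℝ} (hW : IsStandardBM1 P T W)
    {F : Finset ℝ} (hF0 : (0:ℝ) ∈ F) (hFIcc : ∀ x ∈ F, x ∈ Set.Icc (0:ℝ) T)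
    {r : ℝ} (hr : 0 < r) :
    P {ω | ∃ x ∈ F, 3*r ≤ |W x ω|}
      ≤ 3 * ENNReal.ofReal (Real.sqrt 2 * Real.exp (-r^2/(4*T))) := by
  classical
  obtain ⟨hWm, hW0, hWi, hWg, hWc⟩ := hW
  set n : ℕ := F.card - 1 with hn
  have hcard : F.card = n + 1 := by
    have : 0 < F.card := Finset.card_pos.2 ⟨0, hF0⟩
    omega
  set iso := F.orderIsoOfFin hcard with hiso
  set t : Fin (n+1) → ℝ := fun i => (iso i : ℝ) with ht
  have ht_mono : Monotone t := fun a b hab => Subtype.coe_le_coe.2 (iso.monotone hab)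
  have htIcc : ∀ i, t i ∈ Set.Icc (0:ℝ) T := fun i => hFIcc _ (iso i).2
  have ht_mem : ∀ i, t i ∈ F := fun i => (iso i).2
  have ht_surj : ∀ x ∈ F, ∃ k, t k = x := by
    intro x hx
    exact ⟨iso.symm ⟨x, hx⟩, by simp [ht]⟩
  have ht0 : t 0 = 0 := by
    have h1 : t 0 ≤ 0 := by
      obtain ⟨k, hk⟩ := ht_surj 0 hF0
      rw [← hk]
      exact ht_mono (Fin.zero_le _)
    exact le_antisymm h1 (htIcc 0).1
  set X : Fin n → Ω → ℝ := fun i ω => W (t i.succ) ω - W (t i.castSucc) ω with hX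
  have hXm : ∀ i, Measurable (X i) :=
    fun i => (hWm _ (htIcc i.succ)).sub (hWm _ (htIcc i.castSucc))
  have hXi : iIndepFun X P := hWi n t ht_mono htIcc
  -- partial sums telescope
  have hpS : ∀ (k : Fin (n+1)) (ω : Ω), pS X k ω = W (t k) ω - W 0 ω := by
    intro k ω
    rw [← ht0]
    induction k using Fin.induction with
    | zero =>
      rw [pS]
      have : Finset.univ.filter (fun i : Fin n => (i:ℕ) < ((0 : Fin (n+1)):ℕ)) = ∅ := by
        ext i; simp
      rw [this, Finset.sum_empty, sub_self]
    | succ k ih =>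
      rw [pS]
      have hins : Finset.univ.filter (fun i : Fin n => (i:ℕ) < ((k.succ : Fin (n+1)):ℕ))
          = insert k (Finset.univ.filter
              (fun i : Fin n => (i:ℕ) < ((k.castSucc : Fin (n+1)):ℕ))) := by
        ext i
        simp only [Finset.mem_filter, Finset.mem_univ, true_and, Finset.mem_insert,
          Fin.val_succ, Fin.coe_castSucc]
        rw [Nat.lt_succ_iff_lt_or_eq]
        constructor
        · rintro (h | h)
          · exact Or.inr h
          · exact Or.inl (Fin.ext h)
        · rintro (h | h)
          · exact Or.inr (by rw [h])
          · exact Or.inl h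
      rw [hins, Finset.sum_insert (by simp)]
      rw [pS] at ih
      rw [ih, hX]
      ring_nf
  -- tail bound for each k
  set ε : ℝ≥0∞ := ENNReal.ofReal (Real.sqrt 2 * Real.exp (-r^2/(4*T))) with hε
  have htail : ∀ k : Fin (n+1), P {ω | r ≤ |pS X k ω|} ≤ ε := by
    intro k
    have hset : {ω | r ≤ |pS X k ω|} = {ω | r ≤ |W (t k) ω - W 0 ω|} := by
      ext ω; rw [Set.mem_setOf_eq, hpS k ω]; rfl
    rw [hset]
    rcases eq_or_lt_of_le (htIcc k).1 with h0 | h0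
    · have : {ω | r ≤ |W (t k) ω - W 0 ω|} = ∅ := by
        ext ω
        simp only [Set.mem_setOf_eq, Set.mem_empty_iff_false, iff_false, not_le, ← h0]
        rw [sub_self, abs_zero]
        exact hr
      rw [this]
      simp
    · have hmap := hWg 0 (t k) le_rfl h0 (htIcc k).2
      have hmeas : Measurable (fun ω => W (t k) ω - W 0 ω) :=
        (hWm _ (htIcc k)).sub (hWm 0 ⟨le_rfl, hT.le⟩)
      have hsm : MeasurableSet {x : ℝ | r ≤ |x|} :=
        measurableSet_le measurable_const measurable_abs
      have : {ω | r ≤ |W (t k) ω - W 0 ω|}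
          = (fun ω => W (t k) ω - W 0 ω) ⁻¹' {x | r ≤ |x|} := rfl
      rw [this, ← Measure.map_apply hmeas hsm, hmap]
      have hv : 0 < (t k - 0).toNNReal := by
        simp only [sub_zero]
        exact Real.toNNReal_pos.2 h0
      have hvT : ((t k - 0).toNNReal : ℝ) ≤ T := by
        rw [sub_zero, Real.coe_toNNReal _ h0.le]
        exact (htIcc k).2
      exact gauss_tail hT hv hvT hr.le
  -- combine with a.s. W 0 = 0
  have hbad : P {ω | ¬ W 0 ω = 0} = 0 := by
    rw [← ae_iff] at *
    exact hW0
  have hsub : {ω | ∃ x ∈ F, 3*r ≤ |W x ω|}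
      ⊆ {ω | ∃ k : Fin (n+1), 3*r ≤ |pS X k ω|} ∪ {ω | ¬ W 0 ω = 0} := by
    rintro ω ⟨x, hx, hx3⟩
    by_cases h0 : W 0 ω = 0
    · left
      obtain ⟨k, hk⟩ := ht_surj x hx
      refine ⟨k, ?_⟩
      rw [hpS k ω, hk, h0, sub_zero]
      exact hx3
    · right; exact h0
  calc P {ω | ∃ x ∈ F, 3*r ≤ |W x ω|}
      ≤ P ({ω | ∃ k : Fin (n+1), 3*r ≤ |pS X k ω|} ∪ {ω | ¬ W 0 ω = 0}) :=
        measure_mono hsub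
    _ ≤ P {ω | ∃ k : Fin (n+1), 3*r ≤ |pS X k ω|} + P {ω | ¬ W 0 ω = 0} :=
        measure_union_le _ _
    _ ≤ 3 * ε + 0 := add_le_add (etemadi hXm hXi hr htail) (le_of_eq hbad)
    _ = 3 * ε := add_zero _

/-- tail bound for the running supremum over the countable dense set -/
lemma bm_sup_tail {T : ℝ} (hT : 0 < T) {W : ℝ → Ω → ℝ} (hW : IsStandardBM1 P T W)
    {r : ℝ} (hr : 0 < r) :
    P {ω | 3*r < ⨆ q : ↥(DD T), |W (q:ℝ) ω|}
      ≤ 3 * ENNReal.ofReal (Real.sqrt 2 * Real.exp (-r^2/(4*T))) := by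
  classical
  have hne : Nonempty ↥(DD T) := ⟨⟨0, DD_zero_mem hT.le⟩⟩
  obtain ⟨u, hu⟩ := (DD_countable T).exists_eq_range ⟨0, DD_zero_mem hT.le⟩
  have hu_mem : ∀ j, u j ∈ DD T := by
    intro j; rw [hu]; exact Set.mem_range_self j
  set E : ℕ → Set Ω := fun N => {ω | ∃ j ≤ N, 3*r ≤ |W (u j) ω|} with hE
  have hEmono : Monotone E := by
    intro N M hNM ω ⟨j, hj, h3⟩
    exact ⟨j, le_trans hj hNM, h3⟩
  have hsub : {ω | 3*r < ⨆ q : ↥(DD T), |W (q:ℝ) ω|} ⊆ ⋃ N, E N := by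
    intro ω hω
    simp only [Set.mem_setOf_eq] at hω
    have hbdd : BddAbove (Set.range (fun q : ↥(DD T) => |W (q:ℝ) ω|)) := by
      apply BddAbove.mono _ ((isCompact_Icc.image_of_continuousOn
        ((hW.2.2.2.2 ω).abs)).bddAbove)
      rintro y ⟨⟨q, hq⟩, rfl⟩
      exact Set.mem_image_of_mem _ (DD_subset T hq)
    obtain ⟨q, hq⟩ := (lt_ciSup_iff hbdd).1 hω
    have : (q : ℝ) ∈ Set.range u := by rw [← hu]; exact q.2
    obtain ⟨j, hj⟩ := this
    refine Set.mem_iUnion.2 ⟨j, j, le_rfl, ?_⟩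
    rw [hj]; exact hq.le
  calc P {ω | 3*r < ⨆ q : ↥(DD T), |W (q:ℝ) ω|}
      ≤ P (⋃ N, E N) := measure_mono hsub
    _ = ⨆ N, P (E N) := (hEmono.directed_le).measure_iUnion
    _ ≤ 3 * ENNReal.ofReal (Real.sqrt 2 * Real.exp (-r^2/(4*T))) := by
        apply iSup_le
        intro N
        set F : Finset ℝ := insert 0 ((Finset.range (N+1)).image u) with hF
        have hF0 : (0:ℝ) ∈ F := Finset.mem_insert_self _ _
        have hFIcc : ∀ x ∈ F, x ∈ Set.Icc (0:ℝ) T := by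
          intro x hx
          rcases Finset.mem_insert.1 hx with h | h
          · rw [h]; exact ⟨le_rfl, hT.le⟩
          · obtain ⟨j, _, rfl⟩ := Finset.mem_image.1 h
            exact DD_subset T (hu_mem j)
        have hsub2 : E N ⊆ {ω | ∃ x ∈ F, 3*r ≤ |W x ω|} := by
          rintro ω ⟨j, hj, h3⟩
          exact ⟨u j, Finset.mem_insert_of_mem
            (Finset.mem_image_of_mem u (Finset.mem_range.2 (Nat.lt_succ_of_le hj))), h3⟩
        exact le_trans (measure_mono hsub2) (bm_grid hT hW hF0 hFIcc hr)

lemma exponent_bound {T c α : ℝ} (hT : 0 < T) (hc : 0 ≤ c) (hα0 : 0 ≤ α) (hα2 : α < 2) :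
    ∃ N : ℕ, 1 ≤ N ∧ ∀ n : ℕ, N ≤ n →
      c * (3*(n:ℝ)+3)^α - ((n:ℝ)-1/2)^2/(4*T) ≤ -(n:ℝ) := by
  have h1 : Tendsto (fun n : ℕ => 36*c*(n:ℝ)^(α-2) + (n:ℝ)^(-1:ℝ)) atTop (nhds 0) := by
    have ha : Tendsto (fun x : ℝ => x^(α-2)) atTop (nhds 0) := by
      have : α - 2 = -(2 - α) := by ring
      rw [this]
      exact tendsto_rpow_neg_atTop (by linarith)
    have hb : Tendsto (fun x : ℝ => x^(-1:ℝ)) atTop (nhds 0) :=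
      tendsto_rpow_neg_atTop (by norm_num)
    have hc' := ((ha.const_mul (36*c)).add hb).comp tendsto_natCast_atTop_atTop
    simpa [Function.comp_def] using hc'
  have h2 : ∀ᶠ n : ℕ in atTop, 36*c*(n:ℝ)^(α-2) + (n:ℝ)^(-1:ℝ) < (16*T)⁻¹ :=
    h1.eventually_lt_const (by positivity)
  obtain ⟨N0, hN0⟩ := eventually_atTop.1 h2
  refine ⟨max N0 1, le_max_right _ _, ?_⟩
  intro n hn
  have hn1 : 1 ≤ n := le_trans (le_max_right _ _) hn
  have hψ := hN0 n (le_trans (le_max_left _ _) hn)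
  have hnR : (1:ℝ) ≤ (n:ℝ) := by exact_mod_cast hn1
  have hnpos : (0:ℝ) < (n:ℝ) := by linarith
  have hb1 : (3*(n:ℝ)+3)^α ≤ 36*(n:ℝ)^α := by
    have h6 : (3*(n:ℝ)+3) ≤ 6*(n:ℝ) := by linarith
    calc (3*(n:ℝ)+3)^α ≤ (6*(n:ℝ))^α := Real.rpow_le_rpow (by positivity) h6 hα0
      _ = 6^α * (n:ℝ)^α := Real.mul_rpow (by norm_num) (by positivity)
      _ ≤ 36 * (n:ℝ)^α := by
          apply mul_le_mul_of_nonneg_right _ (Real.rpow_nonneg hnpos.le _)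
          calc (6:ℝ)^α ≤ 6^(2:ℝ) := Real.rpow_le_rpow_of_exponent_le (by norm_num) hα2.le
            _ = 36 := by
                rw [show (2:ℝ) = ((2:ℕ):ℝ) by norm_num, Real.rpow_natCast]; norm_num
  have hsplit : (n:ℝ)^α = (n:ℝ)^(α-2) * (n:ℝ)^2 := by
    rw [← Real.rpow_natCast (n:ℝ) 2, ← Real.rpow_add hnpos]
    norm_num
  have hinv : (n:ℝ) = (n:ℝ)^(-1:ℝ) * (n:ℝ)^2 := by
    rw [← Real.rpow_natCast (n:ℝ) 2, ← Real.rpow_add hnpos]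
    norm_num
  have e1 : c*(3*(n:ℝ)+3)^α ≤ 36*c*((n:ℝ)^(α-2)) * (n:ℝ)^2 := by
    calc c*(3*(n:ℝ)+3)^α ≤ c * (36*(n:ℝ)^α) := mul_le_mul_of_nonneg_left hb1 hc
      _ = 36*c*((n:ℝ)^(α-2)) * (n:ℝ)^2 := by rw [hsplit]; ring
  have e3 : 36*c*((n:ℝ)^(α-2)) * (n:ℝ)^2 + (n:ℝ)^(-1:ℝ) * (n:ℝ)^2
      ≤ (16*T)⁻¹ * (n:ℝ)^2 := by
    have h7 := mul_le_mul_of_nonneg_right hψ.le (sq_nonneg (n:ℝ))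
    ring_nf at h7 ⊢
    linarith
  have hfin : (16*T)⁻¹ * (n:ℝ)^2 ≤ ((n:ℝ)-1/2)^2/(4*T) := by
    have hb2 : ((n:ℝ))^2/4 ≤ ((n:ℝ)-1/2)^2 := by nlinarith
    rw [inv_mul_le_iff₀ (by positivity)]
    have h9 : 16 * T * (((n:ℝ) - 1 / 2) ^ 2 / (4 * T)) = 4 * ((n:ℝ)-1/2)^2 := by
      field_simp; ring
    rw [h9]
    nlinarith
  linarith [hinv, e1, e3, hfin]

end Aux

/-- **Lemma (exponential integrability of the running supremum of a power of
the absolute value of a one-dimensional Brownian motion).** -/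
theorem brownian_one_dim_exp_sup_finite
    (T c α : ℝ) (hT : 0 ≤ T) (hc : 0 ≤ c) (hα0 : 0 ≤ α) (hα2 : α < 2)
    {Ω : Type*} [MeasurableSpace Ω] (P : Measure Ω) [IsProbabilityMeasure P]
    (W : ℝ → Ω → ℝ) (hW : IsStandardBM1 P T W) :
    Measurable (fun ω => sSup ((fun t => |W t ω| ^ α) '' Set.Icc (0 : ℝ) T)) ∧
    (∫⁻ ω, ENNReal.ofReal (Real.exp (c *
      sSup ((fun t => |W t ω| ^ α) '' Set.Icc (0 : ℝ) T))) ∂P) < ⊤ := by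
  have hnD : Nonempty ↥(DD T) := ⟨⟨0, DD_zero_mem hT⟩⟩
  have hWm := hW.1
  have hW0 := hW.2.1
  have hWc := hW.2.2.2.2
  have hcontα : ∀ ω, ContinuousOn (fun t => |W t ω| ^ α) (Set.Icc (0:ℝ) T) := by
    intro ω
    apply ContinuousOn.rpow_const ((hWc ω).abs)
    intro x _
    exact Or.inr hα0
  have hsup_eq : (fun ω => sSup ((fun t => |W t ω| ^ α) '' Set.Icc (0:ℝ) T))
      = fun ω => ⨆ q : ↥(DD T), |W (q:ℝ) ω| ^ α :=
    funext fun ω => dense_sup hT (hcontα ω)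
  have hMq : ∀ q : ↥(DD T), Measurable (fun ω => |W (q:ℝ) ω| ^ α) := fun q =>
    (Real.continuous_rpow_const hα0).measurable.comp ((hWm _ (DD_subset T q.2)).abs)
  have hMeas : Measurable (fun ω => sSup ((fun t => |W t ω| ^ α) '' Set.Icc (0:ℝ) T)) := by
    rw [hsup_eq]; exact Measurable.iSup hMq
  refine ⟨hMeas, ?_⟩
  rcases eq_or_lt_of_le hT with hT0 | hT0
  · -- T = 0
    have hae : ∀ᵐ ω ∂P, ENNReal.ofReal (Real.exp (c *
        sSup ((fun t => |W t ω| ^ α) '' Set.Icc (0:ℝ) T)))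
        = ENNReal.ofReal (Real.exp (c * ((0:ℝ) ^ α))) := by
      filter_upwards [hW0] with ω h0
      rw [← hT0, Set.Icc_self, Set.image_singleton, csSup_singleton, h0, abs_zero]
    rw [lintegral_congr_ae hae, lintegral_const, measure_univ, mul_one]
    exact ENNReal.ofReal_lt_top
  · -- T > 0
    set m : Ω → ℝ := fun ω => ⨆ q : ↥(DD T), |W (q:ℝ) ω| with hm
    have hm_meas : Measurable m :=
      Measurable.iSup (fun q => (hWm _ (DD_subset T q.2)).abs)
    have hbddm : ∀ ω, BddAbove (Set.range fun q : ↥(DD T) => |W (q:ℝ) ω|) := by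
      intro ω
      apply BddAbove.mono _ ((isCompact_Icc.image_of_continuousOn ((hWc ω).abs)).bddAbove)
      rintro y ⟨⟨q, hq⟩, rfl⟩
      exact Set.mem_image_of_mem _ (DD_subset T hq)
    have hm0 : ∀ ω, 0 ≤ m ω := fun ω =>
      le_trans (abs_nonneg _) (le_ciSup (hbddm ω) ⟨0, DD_zero_mem hT⟩)
    have hMle : ∀ ω, sSup ((fun t => |W t ω| ^ α) '' Set.Icc (0:ℝ) T) ≤ (m ω) ^ α := by
      intro ω
      rw [congrFun hsup_eq ω]
      apply ciSup_le
      intro q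
      exact Real.rpow_le_rpow (abs_nonneg _) (le_ciSup (hbddm ω) q) hα0
    obtain ⟨N, hN1, hNbound⟩ := exponent_bound hT0 hc hα0 hα2
    set In : ℕ → Set Ω := fun n => {ω | 3*(n:ℝ) ≤ m ω ∧ m ω < 3*(n:ℝ)+3} with hIn
    have hInmeas : ∀ n, MeasurableSet (In n) := by
      intro n
      have : In n = {ω | 3*(n:ℝ) ≤ m ω} ∩ {ω | m ω < 3*(n:ℝ)+3} := rfl
      rw [this]
      exact (measurableSet_le measurable_const hm_meas).inter
        (measurableSet_lt hm_meas measurable_const)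
    set g : ℕ → ℝ≥0∞ := fun n => ENNReal.ofReal (Real.exp (c * (3*(n:ℝ)+3)^α)) with hg
    have hpoint : ∀ ω, ENNReal.ofReal (Real.exp (c *
        sSup ((fun t => |W t ω| ^ α) '' Set.Icc (0:ℝ) T)))
        ≤ ∑' n, (In n).indicator (fun _ => g n) ω := by
      intro ω
      set n₀ := ⌊m ω / 3⌋₊ with hn₀
      have h1 : 3*(n₀:ℝ) ≤ m ω := by
        have h1' := Nat.floor_le (div_nonneg (hm0 ω) (by norm_num) : (0:ℝ) ≤ m ω / 3)
        rw [← hn₀] at h1'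
        linarith
      have h2 : m ω < 3*(n₀:ℝ)+3 := by
        have h2' := Nat.lt_floor_add_one (m ω / 3)
        rw [← hn₀] at h2'
        linarith
      have hmem : ω ∈ In n₀ := ⟨h1, h2⟩
      have hle : ENNReal.ofReal (Real.exp (c *
          sSup ((fun t => |W t ω| ^ α) '' Set.Icc (0:ℝ) T)))
          ≤ (In n₀).indicator (fun _ => g n₀) ω := by
        rw [Set.indicator_of_mem hmem]
        apply ENNReal.ofReal_le_ofReal
        apply Real.exp_le_exp.2
        apply mul_le_mul_of_nonneg_left _ hc
        calc sSup ((fun t => |W t ω| ^ α) '' Set.Icc (0:ℝ) T) ≤ (m ω)^α := hMle ω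
          _ ≤ (3*(n₀:ℝ)+3)^α := Real.rpow_le_rpow (hm0 ω) h2.le hα0
      exact le_trans hle (ENNReal.le_tsum n₀)
    have hint : (∫⁻ ω, ENNReal.ofReal (Real.exp (c *
        sSup ((fun t => |W t ω| ^ α) '' Set.Icc (0:ℝ) T))) ∂P)
        ≤ ∑' n, g n * P (In n) := by
      calc (∫⁻ ω, ENNReal.ofReal (Real.exp (c *
          sSup ((fun t => |W t ω| ^ α) '' Set.Icc (0:ℝ) T))) ∂P)
          ≤ ∫⁻ ω, ∑' n, (In n).indicator (fun _ => g n) ω ∂P := lintegral_mono hpoint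
        _ = ∑' n, ∫⁻ ω, (In n).indicator (fun _ => g n) ω ∂P :=
            lintegral_tsum (fun n => (measurable_const.indicator (hInmeas n)).aemeasurable)
        _ = ∑' n, g n * P (In n) := by
            apply tsum_congr
            intro n
            rw [lintegral_indicator_const (hInmeas n)]
    have htail : ∀ n : ℕ, 1 ≤ n → P (In n)
        ≤ 3 * ENNReal.ofReal (Real.sqrt 2 * Real.exp (-((n:ℝ)-1/2)^2/(4*T))) := by
      intro n hn
      have hr : 0 < (n:ℝ) - 1/2 := by
        have h8 : (1:ℝ) ≤ (n:ℝ) := by exact_mod_cast hn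
        linarith
      have hsub : In n ⊆ {ω | 3*((n:ℝ)-1/2) < m ω} := by
        rintro ω ⟨hω1, _⟩
        simp only [Set.mem_setOf_eq]
        have h8 : (1:ℝ) ≤ (n:ℝ) := by exact_mod_cast hn
        linarith
      exact le_trans (measure_mono hsub) (bm_sup_tail hT0 hW hr)
    have hterm : ∀ n : ℕ, N ≤ n → g n * P (In n)
        ≤ ENNReal.ofReal (3*Real.sqrt 2) * ENNReal.ofReal (Real.exp (-(n:ℝ))) := by
      intro n hn
      have hn1 : 1 ≤ n := le_trans hN1 hn
      calc g n * P (In n)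
          ≤ g n * (3 * ENNReal.ofReal (Real.sqrt 2 * Real.exp (-((n:ℝ)-1/2)^2/(4*T)))) :=
            mul_le_mul_right (htail n hn1) _
        _ = ENNReal.ofReal (3*Real.sqrt 2) *
            ENNReal.ofReal (Real.exp (c*(3*(n:ℝ)+3)^α - ((n:ℝ)-1/2)^2/(4*T))) := by
            rw [hg]
            rw [show (3:ℝ≥0∞) = ENNReal.ofReal 3 from by simp]
            rw [← ENNReal.ofReal_mul (by norm_num : (0:ℝ) ≤ 3),
              ← ENNReal.ofReal_mul (Real.exp_nonneg _),
              ← ENNReal.ofReal_mul (by positivity : (0:ℝ) ≤ 3 * Real.sqrt 2)]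
            congr 1
            rw [neg_div, Real.exp_neg, Real.exp_sub]
            ring
        _ ≤ ENNReal.ofReal (3*Real.sqrt 2) * ENNReal.ofReal (Real.exp (-(n:ℝ))) := by
            apply mul_le_mul_right
            apply ENNReal.ofReal_le_ofReal
            apply Real.exp_le_exp.2
            exact hNbound n hn
    calc (∫⁻ ω, ENNReal.ofReal (Real.exp (c *
        sSup ((fun t => |W t ω| ^ α) '' Set.Icc (0:ℝ) T))) ∂P)
        ≤ ∑' n, g n * P (In n) := hint
      _ ≤ ∑' n : ℕ, ((if n < N then g n * P (In n) else 0)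
            + ENNReal.ofReal (3*Real.sqrt 2) * ENNReal.ofReal (Real.exp (-(n:ℝ)))) := by
          apply ENNReal.tsum_le_tsum
          intro n
          by_cases h : n < N
          · simp only [h, if_true]
            exact le_self_add
          · simp only [h, if_false, zero_add]
            exact hterm n (not_lt.1 h)
      _ = (∑' n : ℕ, if n < N then g n * P (In n) else 0)
            + ∑' n : ℕ, ENNReal.ofReal (3*Real.sqrt 2) * ENNReal.ofReal (Real.exp (-(n:ℝ))) :=
          ENNReal.tsum_add
      _ < ⊤ := by
          apply ENNReal.add_lt_top.2
          constructor
          · rw [tsum_eq_sum (s := Finset.range N)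
              (fun n hn => if_neg (by simpa using hn))]
            apply ENNReal.sum_lt_top.2
            intro n _
            split
            · exact ENNReal.mul_lt_top ENNReal.ofReal_lt_top (measure_lt_top P _)
            · exact ENNReal.zero_lt_top
          · rw [ENNReal.tsum_mul_left]
            apply ENNReal.mul_lt_top ENNReal.ofReal_lt_top
            have hrw : (fun n : ℕ => ENNReal.ofReal (Real.exp (-(n:ℝ))))
                = fun n : ℕ => (ENNReal.ofReal (Real.exp (-1)))^n := by
              funext n
              rw [← ENNReal.ofReal_pow (Real.exp_nonneg _), ← Real.exp_nat_mul]
              congr 1; ring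
            rw [hrw, ENNReal.tsum_geometric]
            apply ENNReal.inv_lt_top.2
            rw [tsub_pos_iff_lt]
            exact ENNReal.ofReal_lt_one.2 (Real.exp_lt_one_iff.2 (by norm_num))
end
end

section
/- Let d,m ∈ ℕ, T ∈ [0,∞), ξ ∈ ℝ^d, μ ∈ C(ℝ^d,ℝ^d), σ ∈ ℝ^{d×m}, φ ∈ C(ℝ^m,[0,∞)), V ∈ C¹(ℝ^d,[0,∞)), let ‖·‖ be a norm on ℝ^d, let J ⊆ [0,T] be an interval with 0 ∈ J, and let y ∈ C(J,ℝ^d) and w ∈ C([0,T],ℝ^m) satisfy for all x ∈ ℝ^d, u ∈ ℝ^m, t ∈ J that V'(x)μ(x+σu) ≤ φ(u)V(x), ‖x‖ ≤ V(x), and y(t) = ξ + ∫₀^t μ(y(s)) ds + σw(t). Then sup_{t∈J} [φ(w(t)) + ‖σw(t)‖] < ∞ and sup_{t∈J} ‖y(t)‖ ≤ V(ξ)·exp( T·sup_{s∈J} φ(w(s)) ) + sup_{t∈J} ‖σw(t)‖. -/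
open MeasureTheory ProbabilityTheory Filter
open scoped ENNReal NNReal

noncomputable section

namespace IsNorm

variable {E : Type*} [AddCommGroup E] [Module ℝ E] {N : E → ℝ}

lemma zero (h : IsNorm N) : N 0 = 0 := (h.1 0).2 rfl

lemma neg (h : IsNorm N) (x : E) : N (-x) = N x := by
  have := h.2.1 (-1) x
  simpa using this

lemma nonneg (h : IsNorm N) (x : E) : 0 ≤ N x := by
  have h1 := h.2.2 x (-x)
  rw [add_neg_cancel, h.zero, h.neg] at h1
  linarith

lemma abs_sub_le_s18 (h : IsNorm N) (x y : E) : |N x - N y| ≤ N (x - y) := by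
  have t1 : N x ≤ N y + N (x - y) := by
    have := h.2.2 y (x - y)
    simpa using this
  have t2 : N y ≤ N x + N (x - y) := by
    have := h.2.2 x (y - x)
    have hyx : N (y - x) = N (x - y) := by
      rw [show y - x = -(x - y) by abel, h.neg]
    simp only [add_sub_cancel] at this
    linarith
  rw [abs_sub_le_iff]
  constructor <;> linarith

lemma sum_le_s18 (h : IsNorm N) {ι : Type*} (s : Finset ι) (f : ι → E) :
    N (∑ i ∈ s, f i) ≤ ∑ i ∈ s, N (f i) := by
  classical
  induction s using Finset.induction_on with
  | empty => simp [h.zero]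
  | insert a s hnot ih =>
    rw [Finset.sum_insert hnot, Finset.sum_insert hnot]
    exact (h.2.2 _ _).trans (by linarith)

lemma continuous {d : ℕ} {N : (Fin d → ℝ) → ℝ} (h : IsNorm N) : Continuous N := by
  have hsum : ∀ v : Fin d → ℝ, N v ≤ ∑ i, |v i| * N (Pi.single i 1) := by
    intro v
    have hv : ∑ i, v i • (Pi.single i 1 : Fin d → ℝ) = v := by
      have : ∀ i, v i • (Pi.single i 1 : Fin d → ℝ) = Pi.single i (v i) := by
        intro i
        rw [← Pi.single_smul, smul_eq_mul, mul_one]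
      simp_rw [this]
      exact Finset.univ_sum_single v
    calc N v = N (∑ i, v i • (Pi.single i 1 : Fin d → ℝ)) := by rw [hv]
      _ ≤ ∑ i, N (v i • (Pi.single i 1 : Fin d → ℝ)) := h.sum_le_s18 _ _
      _ = ∑ i, |v i| * N (Pi.single i 1) := by simp [h.2.1]
  rw [continuous_iff_continuousAt]
  intro x
  have key : Filter.Tendsto (fun y => N y - N x) (nhds x) (nhds 0) := by
    apply squeeze_zero_norm (f := fun y => N y - N x)
      (a := fun y => ∑ i, |(y - x) i| * N (Pi.single i 1))
    · intro y
      calc ‖N y - N x‖ = |N y - N x| := rfl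
        _ ≤ N (y - x) := h.abs_sub_le_s18 y x
        _ ≤ ∑ i, |(y - x) i| * N (Pi.single i 1) := hsum _
    · have hc : Continuous fun y : Fin d → ℝ => ∑ i, |(y - x) i| * N (Pi.single i 1) := by
        apply continuous_finset_sum
        intro i _
        exact (((continuous_apply i).sub continuous_const).abs).mul continuous_const
      have := hc.tendsto x
      simpa using this
  have := key.add (tendsto_const_nhds (x := N x))
  exact (by simpa using this : Filter.Tendsto (fun x => N x) (nhds x) (nhds (N x)))

end IsNorm

/-- **Lemma (a priori bound for solutions of perturbed ODEs via a
Lyapunov-type function).** -/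
theorem perturbed_ode_a_priori_bound
    (d m : ℕ) (hd : 0 < d) (hm : 0 < m) (T : ℝ) (hT : 0 ≤ T)
    (ξ : Fin d → ℝ)
    (μ : (Fin d → ℝ) → (Fin d → ℝ)) (hμ : Continuous μ)
    (σ : Matrix (Fin d) (Fin m) ℝ)
    (φ : (Fin m → ℝ) → ℝ) (hφc : Continuous φ) (hφ0 : ∀ z, 0 ≤ φ z)
    (V : (Fin d → ℝ) → ℝ) (hV : ContDiff ℝ 1 V) (hV0 : ∀ x, 0 ≤ V x)
    (Nd : (Fin d → ℝ) → ℝ) (hNd : IsNorm Nd)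
    (J : Set ℝ) (hJmem : J ⊆ Set.Icc 0 T) (hJord : J.OrdConnected)
    (hJ0 : (0 : ℝ) ∈ J)
    (y : ℝ → (Fin d → ℝ)) (hyc : ContinuousOn y J)
    (w : ℝ → (Fin m → ℝ)) (hwc : ContinuousOn w (Set.Icc (0 : ℝ) T))
    (hLyap : ∀ (x : Fin d → ℝ) (u : Fin m → ℝ),
      fderiv ℝ V x (μ (x + σ.mulVec u)) ≤ φ u * V x)
    (hNV : ∀ x, Nd x ≤ V x)
    (heq : ∀ t ∈ J, y t = ξ + (∫ s in (0 : ℝ)..t, μ (y s)) + σ.mulVec (w t)) :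
    BddAbove ((fun t => φ (w t) + Nd (σ.mulVec (w t))) '' J) ∧
    ∀ t ∈ J, Nd (y t) ≤
      V ξ * Real.exp (T * sSup ((fun s => φ (w s)) '' J)) +
        sSup ((fun t => Nd (σ.mulVec (w t))) '' J) := by
  have hNdc : Continuous Nd := hNd.continuous
  have hσc : Continuous fun u : Fin m → ℝ => σ.mulVec u :=
    σ.mulVecLin.continuous_of_finiteDimensional
  -- boundedness facts
  have bdd : ∀ F : (Fin m → ℝ) → ℝ, Continuous F → BddAbove ((fun t => F (w t)) '' J) := by
    intro F hF
    have h1 : BddAbove ((fun t => F (w t)) '' Set.Icc 0 T) :=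
      (isCompact_Icc.image_of_continuousOn (hF.comp_continuousOn hwc)).bddAbove
    exact h1.mono (Set.image_mono hJmem)
  have hbdd1 : BddAbove ((fun t => φ (w t) + Nd (σ.mulVec (w t))) '' J) :=
    bdd (fun u => φ u + Nd (σ.mulVec u)) (hφc.add (hNdc.comp hσc))
  have hKbdd : BddAbove ((fun s => φ (w s)) '' J) := bdd φ hφc
  have hMbdd : BddAbove ((fun t => Nd (σ.mulVec (w t))) '' J) :=
    bdd (fun u => Nd (σ.mulVec u)) (hNdc.comp hσc)
  set K : ℝ := sSup ((fun s => φ (w s)) '' J) with hK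
  set M : ℝ := sSup ((fun t => Nd (σ.mulVec (w t))) '' J) with hM
  have hKle : ∀ s ∈ J, φ (w s) ≤ K := fun s hs => le_csSup hKbdd ⟨s, hs, rfl⟩
  have hMle : ∀ s ∈ J, Nd (σ.mulVec (w s)) ≤ M := fun s hs => le_csSup hMbdd ⟨s, hs, rfl⟩
  have hK0 : 0 ≤ K := (hφ0 (w 0)).trans (hKle 0 hJ0)
  refine ⟨hbdd1, ?_⟩
  intro t ht
  have ht0 : 0 ≤ t := (hJmem ht).1
  have htT : t ≤ T := (hJmem ht).2
  have hIcc : Set.Icc 0 t ⊆ J := hJord.out hJ0 ht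
  set g : ℝ → (Fin d → ℝ) := fun s => μ (y s) with hg
  have hgc : ContinuousOn g J := hμ.comp_continuousOn hyc
  set z : ℝ → (Fin d → ℝ) := fun u => ξ + ∫ s in (0 : ℝ)..u, g s with hz
  have hyz : ∀ s ∈ J, y s = z s + σ.mulVec (w s) := by
    intro s hs
    rw [heq s hs]
  -- continuity of z on [0, t]
  have hint : IntegrableOn g (Set.uIcc 0 t) volume := by
    rw [Set.uIcc_of_le ht0]
    exact (hgc.mono hIcc).integrableOn_Icc
  have hzc : ContinuousOn z (Set.Icc 0 t) := by
    apply continuousOn_const.add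
    have := intervalIntegral.continuousOn_primitive_interval hint
    rwa [Set.uIcc_of_le ht0] at this
  set F : ℝ → ℝ := fun s => V (z s) with hF
  have hFc : ContinuousOn F (Set.Icc 0 t) := hV.continuous.comp_continuousOn hzc
  have hVd : Differentiable ℝ V := hV.differentiable one_ne_zero
  -- right derivative of F
  have hF' : ∀ s ∈ Set.Ico 0 t,
      HasDerivWithinAt F (fderiv ℝ V (z s) (g s)) (Set.Ici s) s := by
    intro s hs
    have hsJ : s ∈ J := hIcc ⟨hs.1, hs.2.le⟩
    have hIops : Set.Ioc s t ⊆ J := fun r hr => hIcc ⟨hs.1.trans hr.1.le, hr.2⟩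
    have hmem : Set.Ioc s t ∈ nhdsWithin s (Set.Ioi s) :=
      Ioc_mem_nhdsGT_of_mem ⟨le_refl s, hs.2⟩
    have hderiv_int : HasDerivWithinAt (fun u => ∫ r in (0 : ℝ)..u, g r) (g s)
        (Set.Ici s) s := by
      apply intervalIntegral.integral_hasDerivWithinAt_right (t := Set.Ioi s)
      · apply ContinuousOn.intervalIntegrable
        apply hgc.mono
        intro r hr
        rw [Set.uIcc_of_le hs.1] at hr
        exact hIcc ⟨hr.1, hr.2.trans hs.2.le⟩
      · exact ⟨Set.Ioc s t, hmem, (hgc.mono hIops).aestronglyMeasurable measurableSet_Ioc⟩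
      · exact ((hgc s hsJ).mono hIops).mono_of_mem_nhdsWithin hmem
    have hz' : HasDerivWithinAt z (g s) (Set.Ici s) s := hderiv_int.const_add ξ
    exact (hVd (z s)).hasFDerivAt.comp_hasDerivWithinAt s hz'
  -- the bound on the derivative
  have hbound : ∀ s ∈ Set.Ico 0 t, fderiv ℝ V (z s) (g s) ≤ K * F s + 0 := by
    intro s hs
    have hsJ : s ∈ J := hIcc ⟨hs.1, hs.2.le⟩
    have hgy : g s = μ (z s + σ.mulVec (w s)) := by
      show μ (y s) = μ (z s + σ.mulVec (w s))
      rw [hyz s hsJ]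
    rw [add_zero]
    calc fderiv ℝ V (z s) (g s) = fderiv ℝ V (z s) (μ (z s + σ.mulVec (w s))) := by rw [hgy]
      _ ≤ φ (w s) * V (z s) := hLyap (z s) (w s)
      _ ≤ K * V (z s) := mul_le_mul_of_nonneg_right (hKle s hsJ) (hV0 _)
  -- Gronwall
  have hgron := le_gronwallBound_of_liminf_deriv_right_le (f := F)
    (f' := fun s => fderiv ℝ V (z s) (g s)) (δ := V ξ) (K := K) (ε := 0)
    (a := 0) (b := t) hFc
    (fun s hs r hr => by
      have := (hF' s hs).liminf_right_slope_le hr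
      apply this.mono
      intro u hu
      rwa [slope_def_field, div_eq_inv_mul] at hu)
    (by
      have hz0 : z 0 = ξ := by
        rw [hz]
        simp [intervalIntegral.integral_same]
      simp [hF, hz0])
    hbound
  have hzt : V (z t) ≤ V ξ * Real.exp (K * t) := by
    have := hgron t ⟨ht0, le_refl t⟩
    rwa [sub_zero, gronwallBound_ε0] at this
  have hexp : Real.exp (K * t) ≤ Real.exp (T * K) := by
    apply Real.exp_le_exp.2
    rw [mul_comm T K]
    exact mul_le_mul_of_nonneg_left htT hK0
  calc Nd (y t) = Nd (z t + σ.mulVec (w t)) := by rw [hyz t ht]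
    _ ≤ Nd (z t) + Nd (σ.mulVec (w t)) := hNd.2.2 _ _
    _ ≤ V (z t) + M := add_le_add (hNV _) (hMle t ht)
    _ ≤ V ξ * Real.exp (K * t) + M := by linarith
    _ ≤ V ξ * Real.exp (T * K) + M := by
        have := mul_le_mul_of_nonneg_left hexp (hV0 ξ)
        linarith
end
end
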